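/- arXiv:2310.12000 — 6 statements merged into one kernel-verified Lean document; each statement's English description precedes it below -/
import Mathlib

section
/- Let $B \in \mathbb{R}^{n\times n}$ be an invertible lower-triangular matrix with unit diagonal, and let $D, W \in \mathbb{R}^{n\times n}$ be diagonal matrices with strictly positive diagonal entries $D_i$ and $W_{ii}$. Define $\tilde\Sigma^{-1} = B^T D^{-1} B$ and the VADU preconditioner square-root factor $P^{1/2} = B^T (W + D^{-1})^{1/2}$ (so that $P = P^{1/2} P^{T/2} = B^T (W+D^{-1}) B$). Then $P^{-1/2}\,(W + \tilde\Sigma^{-1})\,P^{-T/2} = (W + D^{-1})^{-1/2} B^{-T} W B^{-1} (W + D^{-1})^{-1/2} + (D W + I_n)^{-1}$, where $I_n$ is the $n\times n$ identity matrix. -/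
open Matrix

/-- For the VADU preconditioner `P½ = Bᵀ (W + D⁻¹)^{1/2}` one has
`P^{-1/2} (W + Σ̃⁻¹) P^{-T/2}
  = (W + D⁻¹)^{-1/2} B⁻ᵀ W B⁻¹ (W + D⁻¹)^{-1/2} + (D W + Iₙ)⁻¹`. -/
theorem vadu_preconditioned_matrix_formula {n : ℕ}
    (B D W Sinv Phalf : Matrix (Fin n) (Fin n) ℝ)
    (d w : Fin n → ℝ) (hd : ∀ i, 0 < d i) (hw : ∀ i, 0 < w i)
    (hBlow : ∀ i j : Fin n, i < j → B i j = 0) (hBdiag : ∀ i, B i i = 1)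
    (hBinv : IsUnit B.det)
    (hD : D = Matrix.diagonal d) (hW : W = Matrix.diagonal w)
    (hSinv : Sinv = Bᵀ * D⁻¹ * B)
    (hP : Phalf = Bᵀ * Matrix.diagonal (fun i => Real.sqrt (w i + (d i)⁻¹))) :
    Phalf⁻¹ * (W + Sinv) * (Phalf⁻¹)ᵀ =
      (Matrix.diagonal (fun i => Real.sqrt (w i + (d i)⁻¹)))⁻¹ * (B⁻¹)ᵀ * W * B⁻¹ *
          (Matrix.diagonal (fun i => Real.sqrt (w i + (d i)⁻¹)))⁻¹
        + (D * W + 1)⁻¹ := by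
  set s : Fin n → ℝ := fun i => Real.sqrt (w i + (d i)⁻¹) with hs
  have hpos : ∀ i, 0 < w i + (d i)⁻¹ := fun i =>
    add_pos (hw i) (inv_pos.mpr (hd i))
  have hspos : ∀ i, 0 < s i := fun i => Real.sqrt_pos.mpr (hpos i)
  have hss : ∀ i, s i * s i = w i + (d i)⁻¹ := fun i =>
    Real.mul_self_sqrt (hpos i).le
  have hSdet : IsUnit (Matrix.diagonal s).det := by
    rw [Matrix.det_diagonal]
    exact isUnit_iff_ne_zero.mpr (Finset.prod_ne_zero_iff.mpr fun i _ => (hspos i).ne')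
  have hBT : IsUnit (Bᵀ).det := by rwa [Matrix.det_transpose]
  have hPinv : Phalf⁻¹ = (Matrix.diagonal s)⁻¹ * (Bᵀ)⁻¹ := by
    rw [hP, Matrix.mul_inv_rev]
  have hSinvdiag : (Matrix.diagonal s)⁻¹ = Matrix.diagonal fun i => (s i)⁻¹ := by
    refine Matrix.inv_eq_right_inv ?_
    rw [Matrix.diagonal_mul_diagonal, ← Matrix.diagonal_one]
    exact congrArg Matrix.diagonal (funext fun i => mul_inv_cancel₀ (hspos i).ne')
  have hDinv : D⁻¹ = Matrix.diagonal fun i => (d i)⁻¹ := by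
    rw [hD]
    refine Matrix.inv_eq_right_inv ?_
    rw [Matrix.diagonal_mul_diagonal, ← Matrix.diagonal_one]
    exact congrArg Matrix.diagonal (funext fun i => mul_inv_cancel₀ (hd i).ne')
  have hBtinv : (Bᵀ)⁻¹ = (B⁻¹)ᵀ := (Matrix.transpose_nonsing_inv B).symm
  have hcancel : (Bᵀ)⁻¹ * Bᵀ = 1 := Matrix.nonsing_inv_mul _ hBT
  -- expand LHS
  rw [hPinv, hSinv, hW, Matrix.transpose_mul, Matrix.transpose_nonsing_inv,
    Matrix.transpose_transpose]
  have key : (Matrix.diagonal s)⁻¹ * (Bᵀ)⁻¹ * (Matrix.diagonal w + Bᵀ * D⁻¹ * B) *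
      ((B⁻¹) * ((Matrix.diagonal s)⁻¹)ᵀ)
      = (Matrix.diagonal s)⁻¹ * (B⁻¹)ᵀ * Matrix.diagonal w * B⁻¹ * (Matrix.diagonal s)⁻¹
        + (Matrix.diagonal s)⁻¹ * D⁻¹ * (Matrix.diagonal s)⁻¹ := by
    have hST : ((Matrix.diagonal s)⁻¹)ᵀ = (Matrix.diagonal s)⁻¹ := by
      rw [hSinvdiag, Matrix.diagonal_transpose]
    have h1 : B * B⁻¹ = 1 := Matrix.mul_nonsing_inv _ hBinv
    set A := (Matrix.diagonal s)⁻¹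
    rw [hST, mul_add, add_mul]
    congr 1
    · rw [hBtinv]
      simp only [Matrix.mul_assoc]
    · calc A * (Bᵀ)⁻¹ * (Bᵀ * D⁻¹ * B) * (B⁻¹ * A)
          = A * (((Bᵀ)⁻¹ * Bᵀ) * (D⁻¹ * ((B * B⁻¹) * A))) := by
            simp only [Matrix.mul_assoc]
        _ = A * (D⁻¹ * A) := by rw [hcancel, h1]; simp
        _ = A * D⁻¹ * A := by rw [Matrix.mul_assoc]
  rw [key]
  congr 1
  -- diagonal identity
  rw [hSinvdiag, hDinv, Matrix.diagonal_mul_diagonal, Matrix.diagonal_mul_diagonal, hD]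
  have : (Matrix.diagonal d * Matrix.diagonal w + (1 : Matrix (Fin n) (Fin n) ℝ))⁻¹
      = Matrix.diagonal fun i => (d i * w i + 1)⁻¹ := by
    rw [Matrix.diagonal_mul_diagonal, ← Matrix.diagonal_one, Matrix.diagonal_add]
    refine Matrix.inv_eq_right_inv ?_
    rw [Matrix.diagonal_mul_diagonal, ← Matrix.diagonal_one]
    refine congrArg Matrix.diagonal (funext fun i => mul_inv_cancel₀ ?_)
    have := mul_pos (hd i) (hw i)
    linarith
  rw [this]
  refine congrArg Matrix.diagonal (funext fun i => ?_)
  have hdi := hd i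
  have hwi := hw i
  have h1 : (s i)⁻¹ * (d i)⁻¹ * (s i)⁻¹ = (d i * (s i * s i))⁻¹ := by
    rw [mul_inv]
    ring
  rw [h1, hss i]
  congr 1
  field_simp
end

section
/- Let $B \in \mathbb{R}^{n\times n}$ be an invertible lower-triangular matrix with unit diagonal, and let $D, W \in \mathbb{R}^{n\times n}$ be diagonal matrices with strictly positive diagonal entries $D_i$ and $W_{ii}$. Define $\tilde\Sigma = B^{-1} D B^{-T}$, $\tilde\Sigma^{-1} = B^T D^{-1} B$, and the VADU-preconditioned matrix $M = P^{-1/2}(W + \tilde\Sigma^{-1})P^{-T/2}$ with $P^{1/2} = B^T(W+D^{-1})^{1/2}$. Let $\lambda_n(A) \le \dots \le \lambda_1(A)$ denote the eigenvalues of a symmetric matrix $A \in \mathbb{R}^{n\times n}$. Then for every $l$ with $1 \le l \le n$: $(\lambda_l(\tilde\Sigma)\min_i(W_{ii}) + 1)\,\min_i\big((D_i W_{ii}+1)^{-1}\big) \;\le\; \lambda_l(M) \;\le\; (\lambda_l(\tilde\Sigma)\max_i(W_{ii}) + 1)\,\max_i\big((D_i W_{ii}+1)^{-1}\big)$. -/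
open Matrix Polynomial Module Submodule

namespace VADU
variable {n : ℕ}


lemma multiset_map_comp_perm (f : Fin n → ℝ) (σ : Equiv.Perm (Fin n)) :
    Multiset.map (f ∘ σ) Finset.univ.val = Multiset.map f Finset.univ.val := by
  rw [Fin.univ_val_map, Fin.univ_val_map]
  exact Multiset.coe_eq_coe.mpr (σ.ofFn_comp_perm f)

lemma monotone_unique {f g : Fin n → ℝ} (hf : Monotone f) (hg : Monotone g)
    (h : Multiset.map f Finset.univ.val = Multiset.map g Finset.univ.val) : f = g := by
  apply List.ofFn_injective
  refine List.Perm.eq_of_sortedLE hf.sortedLE_ofFn hg.sortedLE_ofFn ?_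
  rw [Fin.univ_val_map, Fin.univ_val_map] at h
  exact Multiset.coe_eq_coe.mp h

lemma antitone_unique {f g : Fin n → ℝ} (hf : Antitone f) (hg : Antitone g)
    (h : Multiset.map f Finset.univ.val = Multiset.map g Finset.univ.val) : f = g := by
  have hrev : Antitone (fun i : Fin n => i.rev) := fun i j hij => Fin.rev_le_rev.mpr hij
  have h1 : Monotone (f ∘ fun i : Fin n => i.rev) := hf.comp hrev
  have h2 : Monotone (g ∘ fun i : Fin n => i.rev) := hg.comp hrev
  have hperm : (f ∘ fun i : Fin n => i.rev) = (f ∘ (Fin.revPerm : Equiv.Perm (Fin n))) := rfl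
  have key := monotone_unique h1 h2 (by
    rw [show (f ∘ fun i : Fin n => i.rev) = (f ∘ (Fin.revPerm : Equiv.Perm (Fin n))) from rfl,
      show (g ∘ fun i : Fin n => i.rev) = (g ∘ (Fin.revPerm : Equiv.Perm (Fin n))) from rfl,
      multiset_map_comp_perm, multiset_map_comp_perm, h])
  funext i
  have := congrFun key i.rev
  simpa [Fin.rev_rev] using this

lemma exists_antitone_perm (f : Fin n → ℝ) : ∃ σ : Equiv.Perm (Fin n), Antitone (f ∘ σ) := by
  refine ⟨Tuple.sort (-f), fun i j hij => ?_⟩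
  have := Tuple.monotone_sort (-f) hij
  simpa using this

lemma exists_comp_perm_eq {f g : Fin n → ℝ}
    (h : Multiset.map f Finset.univ.val = Multiset.map g Finset.univ.val) :
    ∃ σ : Equiv.Perm (Fin n), f ∘ σ = g := by
  obtain ⟨σf, hσf⟩ := exists_antitone_perm f
  obtain ⟨σg, hσg⟩ := exists_antitone_perm g
  have key : f ∘ σf = g ∘ σg := antitone_unique hσf hσg
    (by rw [multiset_map_comp_perm, multiset_map_comp_perm, h])
  refine ⟨σg.symm.trans σf, ?_⟩
  funext i
  have := congrFun key (σg.symm i)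
  simpa using this

lemma multiset_eq_of_prod_eq {f g : Fin n → ℝ}
    (h : ∏ i, (X - C (f i)) = ∏ i, (X - C (g i))) :
    Multiset.map f Finset.univ.val = Multiset.map g Finset.univ.val := by
  have key : ∀ u : Fin n → ℝ, ∏ i, (X - C (u i)) =
      ((Multiset.map u Finset.univ.val).map fun a => X - C a).prod := by
    intro u
    rw [Multiset.map_map]
    rfl
  rw [key f, key g] at h
  have := congrArg Polynomial.roots h
  rwa [Polynomial.roots_multiset_prod_X_sub_C, Polynomial.roots_multiset_prod_X_sub_C] at this



lemma charpoly_diagonal (f : Fin n → ℝ) :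
    (Matrix.diagonal f).charpoly = ∏ i, (X - C (f i)) := by
  have h : (Matrix.diagonal f).charmatrix = Matrix.diagonal (fun i => X - C (f i)) := by
    ext i j
    by_cases hij : i = j
    · subst hij; simp [charmatrix_apply]
    · simp [charmatrix_apply, Matrix.diagonal_apply_ne _ hij]
  rw [Matrix.charpoly, h, Matrix.det_diagonal]

lemma charpoly_conj {P A : Matrix (Fin n) (Fin n) ℝ} (hP : IsUnit P.det) :
    (P * A * P⁻¹).charpoly = A.charpoly := by
  have hPP : P * P⁻¹ = 1 := Matrix.mul_nonsing_inv P hP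
  have hmap : (P.map C) * (P⁻¹.map C) = 1 := by
    rw [← Matrix.map_mul, hPP]
    simp
  have hc : (P * A * P⁻¹).charmatrix = (P.map C) * A.charmatrix * (P⁻¹.map C) := by
    rw [charmatrix]
    rw [charmatrix]
    rw [Matrix.mul_sub, Matrix.sub_mul]
    congr 1
    · -- scalar part
      have hcomm : P.map C * Matrix.scalar (Fin n) X = Matrix.scalar (Fin n) X * P.map C :=
        (Matrix.scalar_commute X (fun r => (Commute.all _ r)) (P.map C)).symm
      rw [hcomm, Matrix.mul_assoc, hmap, Matrix.mul_one]
    · simp [RingHom.mapMatrix_apply, ← Matrix.map_mul]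
  have hdet : IsUnit ((P.map C).det) := by
    refine IsUnit.of_mul_eq_one ((P⁻¹.map C).det) ?_
    rw [← Matrix.det_mul, hmap, Matrix.det_one]
  rw [Matrix.charpoly, Matrix.charpoly, hc, Matrix.det_mul, Matrix.det_mul]
  rw [mul_comm ((P.map C).det) _, mul_assoc, ← Matrix.det_mul, hmap, Matrix.det_one, mul_one]

lemma charpoly_of_eigenbasis {A : Matrix (Fin n) (Fin n) ℝ}
    (b : OrthonormalBasis (Fin n) ℝ (EuclideanSpace ℝ (Fin n))) (f : Fin n → ℝ)
    (h : ∀ i, A *ᵥ (b i : Fin n → ℝ) = f i • (b i : Fin n → ℝ)) :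
    A.charpoly = ∏ i, (X - C (f i)) := by
  classical
  set P : Matrix (Fin n) (Fin n) ℝ := Matrix.of (fun i j => b j i) with hPdef
  have horthij : ∀ i j, (Pᵀ * P) i j = if i = j then 1 else 0 := by
    intro i j
    have hinner : (inner ℝ (b i) (b j) : ℝ) = ∑ k, b i k * b j k := by
      simp [PiLp.inner_apply, RCLike.inner_apply, mul_comm]
    have := orthonormal_iff_ite.mp b.orthonormal i j
    rw [hinner] at this
    simpa [Matrix.mul_apply, hPdef] using this
  have horth : Pᵀ * P = 1 := by
    ext i j
    rw [horthij i j]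
    simp [Matrix.one_apply]
  have hPdet : IsUnit P.det := by
    refine IsUnit.of_mul_eq_one (Pᵀ.det) ?_
    rw [mul_comm, ← Matrix.det_mul, horth, Matrix.det_one]
  have hAP : A * P = P * Matrix.diagonal f := by
    ext i j
    have hj := congrFun (h j) i
    simp only [Matrix.mulVec, dotProduct, Pi.smul_apply, smul_eq_mul] at hj
    simp only [Matrix.mul_apply, hPdef, Matrix.of_apply, Matrix.diagonal_apply]
    rw [hj]
    rw [show (∑ x, b x i * if x = j then f x else 0) = ∑ x, if x = j then b x i * f x else 0 from
      Finset.sum_congr rfl (fun x _ => by split <;> simp)]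
    rw [Finset.sum_ite_eq' Finset.univ j (fun k => b k i * f k)]
    simp [Pi.smul_apply, mul_comm]
  have hA : A = P * Matrix.diagonal f * P⁻¹ := by
    have := congrArg (fun X => X * P⁻¹) hAP
    simpa [Matrix.mul_assoc, Matrix.mul_nonsing_inv P hPdet] using this
  rw [hA, charpoly_conj hPdet, charpoly_diagonal]



lemma inner_eq_dot (x y : EuclideanSpace ℝ (Fin n)) :
    (inner ℝ x y : ℝ) = (x : Fin n → ℝ) ⬝ᵥ (y : Fin n → ℝ) := by
  simp [PiLp.inner_apply, RCLike.inner_apply, dotProduct, mul_comm]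

lemma inner_zero_of_mem_span (b : OrthonormalBasis (Fin n) ℝ (EuclideanSpace ℝ (Fin n)))
    (s : Set (Fin n)) {x : EuclideanSpace ℝ (Fin n)}
    (hx : x ∈ Submodule.span ℝ (⇑b '' s)) {j : Fin n} (hj : j ∉ s) :
    (inner ℝ (b j) x : ℝ) = 0 := by
  induction hx using Submodule.span_induction with
  | mem y hy =>
    obtain ⟨i, his, rfl⟩ := hy
    exact b.orthonormal.2 (fun h => hj (h ▸ his))
  | zero => simp
  | add y z hy hz ihy ihz => rw [inner_add_right, ihy, ihz, add_zero]
  | smul c y hy ihy => rw [inner_smul_right, ihy, mul_zero]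

lemma repr_mulVec {A : Matrix (Fin n) (Fin n) ℝ} (hA : Aᵀ = A)
    (b : OrthonormalBasis (Fin n) ℝ (EuclideanSpace ℝ (Fin n))) {f : Fin n → ℝ}
    (hb : ∀ i, A *ᵥ (b i : Fin n → ℝ) = f i • (b i : Fin n → ℝ))
    (x : EuclideanSpace ℝ (Fin n)) (i : Fin n) :
    (inner ℝ (b i) (WithLp.toLp 2 (A *ᵥ x)) : ℝ) = f i * inner ℝ (b i) x := by
  rw [inner_eq_dot, inner_eq_dot]
  calc (b i : Fin n → ℝ) ⬝ᵥ (A *ᵥ x) = ((b i : Fin n → ℝ) ᵥ* A) ⬝ᵥ x := by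
        rw [Matrix.dotProduct_mulVec]
    _ = (A *ᵥ (b i : Fin n → ℝ)) ⬝ᵥ x := by rw [← Matrix.vecMul_transpose, hA]
    _ = f i * ((b i : Fin n → ℝ) ⬝ᵥ x) := by rw [hb i, smul_dotProduct]; rfl

lemma quad_eq_sum {A : Matrix (Fin n) (Fin n) ℝ} (hA : Aᵀ = A)
    (b : OrthonormalBasis (Fin n) ℝ (EuclideanSpace ℝ (Fin n))) {f : Fin n → ℝ}
    (hb : ∀ i, A *ᵥ (b i : Fin n → ℝ) = f i • (b i : Fin n → ℝ))
    (x : EuclideanSpace ℝ (Fin n)) :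
    (x : Fin n → ℝ) ⬝ᵥ (A *ᵥ x) = ∑ i, f i * (inner ℝ (b i) x : ℝ)^2 := by
  set y : EuclideanSpace ℝ (Fin n) := WithLp.toLp 2 (A *ᵥ x) with hy
  have h1 : (x : Fin n → ℝ) ⬝ᵥ (A *ᵥ x) = (inner ℝ x y : ℝ) := (inner_eq_dot x y).symm
  have h2 : (inner ℝ x y : ℝ) = inner ℝ (b.repr x) (b.repr y) :=
    (b.repr.inner_map_map x y).symm
  have h3 : (inner ℝ (b.repr x) (b.repr y) : ℝ) = ∑ i, (b.repr x i) * (b.repr y i) := by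
    simp only [PiLp.inner_apply, RCLike.inner_apply, starRingEnd_apply, star_trivial, mul_comm]
  rw [h1, h2, h3]
  refine Finset.sum_congr rfl (fun i _ => ?_)
  rw [b.repr_apply_apply, b.repr_apply_apply, repr_mulVec hA b hb x i]
  ring

lemma self_dot_eq_sum (b : OrthonormalBasis (Fin n) ℝ (EuclideanSpace ℝ (Fin n)))
    (x : EuclideanSpace ℝ (Fin n)) :
    (x : Fin n → ℝ) ⬝ᵥ (x : Fin n → ℝ) = ∑ i, (inner ℝ (b i) x : ℝ)^2 := by
  have h2 : (inner ℝ x x : ℝ) = inner ℝ (b.repr x) (b.repr x) := (b.repr.inner_map_map x x).symm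
  have h3 : (inner ℝ (b.repr x) (b.repr x) : ℝ) = ∑ i, (b.repr x i) * (b.repr x i) := by
    simp only [PiLp.inner_apply, RCLike.inner_apply, starRingEnd_apply, star_trivial]
  rw [← inner_eq_dot, h2, h3]
  refine Finset.sum_congr rfl (fun i _ => ?_)
  rw [b.repr_apply_apply]
  ring

lemma le_quad_span {A : Matrix (Fin n) (Fin n) ℝ} (hA : Aᵀ = A)
    (b : OrthonormalBasis (Fin n) ℝ (EuclideanSpace ℝ (Fin n))) {f : Fin n → ℝ}
    (hb : ∀ i, A *ᵥ (b i : Fin n → ℝ) = f i • (b i : Fin n → ℝ)) (hf : Antitone f)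
    (l : Fin n) {x : EuclideanSpace ℝ (Fin n)}
    (hx : x ∈ Submodule.span ℝ (⇑b '' ↑(Finset.Iic l))) :
    f l * ((x : Fin n → ℝ) ⬝ᵥ (x : Fin n → ℝ)) ≤ (x : Fin n → ℝ) ⬝ᵥ (A *ᵥ x) := by
  rw [quad_eq_sum hA b hb, self_dot_eq_sum b, Finset.mul_sum]
  refine Finset.sum_le_sum (fun i _ => ?_)
  by_cases hi : i ∈ Finset.Iic l
  · have : f l ≤ f i := hf (Finset.mem_Iic.mp hi)
    nlinarith [sq_nonneg (inner ℝ (b i) x : ℝ)]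
  · rw [inner_zero_of_mem_span b _ hx (by simpa using hi)]
    simp

lemma quad_le_span {A : Matrix (Fin n) (Fin n) ℝ} (hA : Aᵀ = A)
    (b : OrthonormalBasis (Fin n) ℝ (EuclideanSpace ℝ (Fin n))) {f : Fin n → ℝ}
    (hb : ∀ i, A *ᵥ (b i : Fin n → ℝ) = f i • (b i : Fin n → ℝ)) (hf : Antitone f)
    (l : Fin n) {x : EuclideanSpace ℝ (Fin n)}
    (hx : x ∈ Submodule.span ℝ (⇑b '' ↑(Finset.Ici l))) :
    (x : Fin n → ℝ) ⬝ᵥ (A *ᵥ x) ≤ f l * ((x : Fin n → ℝ) ⬝ᵥ (x : Fin n → ℝ)) := by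
  rw [quad_eq_sum hA b hb, self_dot_eq_sum b, Finset.mul_sum]
  refine Finset.sum_le_sum (fun i _ => ?_)
  by_cases hi : i ∈ Finset.Ici l
  · have : f i ≤ f l := hf (Finset.mem_Ici.mp hi)
    nlinarith [sq_nonneg (inner ℝ (b i) x : ℝ)]
  · rw [inner_zero_of_mem_span b _ hx (by simpa using hi)]
    simp

lemma finrank_span_orthonormal (b : OrthonormalBasis (Fin n) ℝ (EuclideanSpace ℝ (Fin n)))
    (s : Finset (Fin n)) :
    finrank ℝ (Submodule.span ℝ (⇑b '' ↑s)) = s.card := by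
  have li : LinearIndependent ℝ (fun i : s => b i) :=
    b.orthonormal.linearIndependent.comp Subtype.val Subtype.val_injective
  have hrange : Set.range (fun i : s => b i) = ⇑b '' ↑s := by
    rw [show (fun i : s => b i) = ⇑b ∘ Subtype.val from rfl, Set.range_comp]
    congr 1
    ext v
    simp
  rw [← hrange, finrank_span_eq_card li, Fintype.card_coe]

lemma exists_ne_zero_mem_inf {V U : Submodule ℝ (EuclideanSpace ℝ (Fin n))}
    (h : n < finrank ℝ V + finrank ℝ U) :
    ∃ x : EuclideanSpace ℝ (Fin n), x ∈ V ∧ x ∈ U ∧ x ≠ 0 := by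
  have hne : V ⊓ U ≠ ⊥ := by
    intro hbot
    have heq := Submodule.finrank_sup_add_finrank_inf_eq V U
    rw [hbot, finrank_bot] at heq
    have hle := Submodule.finrank_le (V ⊔ U)
    rw [finrank_euclideanSpace, Fintype.card_fin] at hle
    omega
  obtain ⟨x, hx, hx0⟩ := Submodule.exists_mem_ne_zero_of_ne_bot hne
  exact ⟨x, hx.1, hx.2, hx0⟩



-- placeholders for already-proven lemmas (tested separately)
lemma transpose_eq_of_isHermitian {A : Matrix (Fin n) (Fin n) ℝ} (hA : A.IsHermitian) :
    Aᵀ = A := by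
  rw [← Matrix.conjTranspose_eq_transpose_of_trivial]
  exact hA

lemma eigenbasis_of_charpoly {A : Matrix (Fin n) (Fin n) ℝ} {μ : Fin n → ℝ}
    (hA : A.IsHermitian) (hμc : A.charpoly = ∏ i, (X - C (μ i))) :
    ∃ b : OrthonormalBasis (Fin n) ℝ (EuclideanSpace ℝ (Fin n)),
      ∀ i, A *ᵥ (b i : Fin n → ℝ) = μ i • (b i : Fin n → ℝ) := by
  have h1 := charpoly_of_eigenbasis hA.eigenvectorBasis hA.eigenvalues hA.mulVec_eigenvectorBasis
  obtain ⟨σ, hσ⟩ := exists_comp_perm_eq (multiset_eq_of_prod_eq (hμc.symm.trans h1))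
  refine ⟨hA.eigenvectorBasis.reindex σ, fun i => ?_⟩
  simp only [OrthonormalBasis.reindex_apply]
  have h2 := hA.mulVec_eigenvectorBasis (σ.symm i)
  have h3 : hA.eigenvalues (σ.symm i) = μ i := by
    have := congrFun hσ (σ.symm i)
    simpa using this.symm
  rw [← h3]
  exact h2

lemma exists_sorted_eigenbasis {A : Matrix (Fin n) (Fin n) ℝ} (hA : A.IsHermitian) :
    ∃ (f : Fin n → ℝ) (b : OrthonormalBasis (Fin n) ℝ (EuclideanSpace ℝ (Fin n))),
      Antitone f ∧ (∀ i, A *ᵥ (b i : Fin n → ℝ) = f i • (b i : Fin n → ℝ)) ∧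
      A.charpoly = ∏ i, (X - C (f i)) := by
  obtain ⟨σ, hσ⟩ := exists_antitone_perm hA.eigenvalues
  refine ⟨hA.eigenvalues ∘ σ, hA.eigenvectorBasis.reindex σ.symm, hσ, fun i => ?_, ?_⟩
  · simp only [OrthonormalBasis.reindex_apply, Equiv.symm_symm]
    exact hA.mulVec_eigenvectorBasis (σ i)
  · exact charpoly_of_eigenbasis (hA.eigenvectorBasis.reindex σ.symm) _
      (fun i => by
        simp only [OrthonormalBasis.reindex_apply, Equiv.symm_symm]
        exact hA.mulVec_eigenvectorBasis (σ i))

lemma dotProduct_self_pos {x : EuclideanSpace ℝ (Fin n)} (hx : x ≠ 0) :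
    0 < (x : Fin n → ℝ) ⬝ᵥ (x : Fin n → ℝ) := by
  rcases lt_or_eq_of_le (Finset.sum_nonneg fun i _ => mul_self_nonneg (x i) :
      (0:ℝ) ≤ (x : Fin n → ℝ) ⬝ᵥ (x : Fin n → ℝ)) with h | h
  · exact h
  · exfalso
    exact hx (by simpa using dotProduct_self_eq_zero.mp h.symm)

/-- Key monotonicity: if `B - A` is PSD then the decreasingly-sorted eigenvalues satisfy
`μ l ≤ ν l`. -/
lemma sorted_mono {A B : Matrix (Fin n) (Fin n) ℝ} {μ ν : Fin n → ℝ}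
    (hA : A.IsHermitian) (hB : B.IsHermitian)
    (hμa : Antitone μ) (hνa : Antitone ν)
    (hμc : A.charpoly = ∏ i, (X - C (μ i))) (hνc : B.charpoly = ∏ i, (X - C (ν i)))
    (hpsd : (B - A).PosSemidef) (l : Fin n) : μ l ≤ ν l := by
  obtain ⟨bA, hbA⟩ := eigenbasis_of_charpoly hA hμc
  obtain ⟨bB, hbB⟩ := eigenbasis_of_charpoly hB hνc
  set V := Submodule.span ℝ (⇑bA '' ↑(Finset.Iic l))
  set U := Submodule.span ℝ (⇑bB '' ↑(Finset.Ici l))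
  have hdim : n < finrank ℝ V + finrank ℝ U := by
    rw [finrank_span_orthonormal bA, finrank_span_orthonormal bB,
      Fin.card_Iic, Fin.card_Ici]
    have := l.isLt
    omega
  obtain ⟨x, hxV, hxU, hx0⟩ := exists_ne_zero_mem_inf hdim
  have h1 : μ l * ((x : Fin n → ℝ) ⬝ᵥ (x : Fin n → ℝ)) ≤ (x : Fin n → ℝ) ⬝ᵥ (A *ᵥ x) :=
    le_quad_span (transpose_eq_of_isHermitian hA) bA hbA hμa l hxV
  have h2 : (x : Fin n → ℝ) ⬝ᵥ (B *ᵥ x) ≤ ν l * ((x : Fin n → ℝ) ⬝ᵥ (x : Fin n → ℝ)) :=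
    quad_le_span (transpose_eq_of_isHermitian hB) bB hbB hνa l hxU
  have h3 : (x : Fin n → ℝ) ⬝ᵥ (A *ᵥ x) ≤ (x : Fin n → ℝ) ⬝ᵥ (B *ᵥ x) := by
    have := hpsd.dotProduct_mulVec_nonneg (x : Fin n → ℝ)
    simp only [star_trivial] at this
    rw [Matrix.sub_mulVec, dotProduct_sub] at this
    linarith
  have h4 := dotProduct_self_pos hx0
  have := h1.trans (h3.trans h2)
  exact le_of_mul_le_mul_right (by linarith) h4




lemma isHermitian_of_transpose {A : Matrix (Fin n) (Fin n) ℝ} (h : Aᵀ = A) : A.IsHermitian := by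
  show Aᴴ = A
  rwa [Matrix.conjTranspose_eq_transpose_of_trivial]

lemma herm_xdt (X : Matrix (Fin n) (Fin n) ℝ) (f : Fin n → ℝ) :
    (X * Matrix.diagonal f * Xᵀ).IsHermitian := by
  apply isHermitian_of_transpose
  simp [Matrix.transpose_mul, Matrix.diagonal_transpose, Matrix.mul_assoc]

lemma herm_tdx (X : Matrix (Fin n) (Fin n) ℝ) (f : Fin n → ℝ) :
    (Xᵀ * Matrix.diagonal f * X).IsHermitian := by
  have := herm_xdt Xᵀ f
  rwa [Matrix.transpose_transpose] at this

lemma herm_diag (f : Fin n → ℝ) : (Matrix.diagonal f).IsHermitian :=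
  isHermitian_of_transpose (Matrix.diagonal_transpose f)

lemma herm_smul {A : Matrix (Fin n) (Fin n) ℝ} (c : ℝ) (h : A.IsHermitian) :
    (c • A).IsHermitian := by
  apply isHermitian_of_transpose
  rw [Matrix.transpose_smul, transpose_eq_of_isHermitian h]

lemma herm_add {A B : Matrix (Fin n) (Fin n) ℝ} (hA : A.IsHermitian) (hB : B.IsHermitian) :
    (A + B).IsHermitian := hA.add hB

lemma smul_diag (c : ℝ) (f : Fin n → ℝ) :
    c • Matrix.diagonal f = Matrix.diagonal (fun i => c * f i) := by
  ext i j
  by_cases h : i = j <;> simp [Matrix.diagonal_apply, h]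

lemma psd_diag {f : Fin n → ℝ} (h : ∀ i, 0 ≤ f i) : (Matrix.diagonal f).PosSemidef :=
  Matrix.PosSemidef.diagonal (fun i => h i)

lemma psd_conj {f : Fin n → ℝ} (h : ∀ i, 0 ≤ f i) (X : Matrix (Fin n) (Fin n) ℝ) :
    (X * Matrix.diagonal f * Xᵀ).PosSemidef := by
  have := (psd_diag h).mul_mul_conjTranspose_same X
  rwa [Matrix.conjTranspose_eq_transpose_of_trivial] at this


end VADU

set_option maxHeartbeats 2000000 in
/-- Eigenvalue bounds for the VADU-preconditioned matrix
`M = P^{-1/2}(W + Σ̃⁻¹)P^{-T/2}` with `P½ = Bᵀ(W + D⁻¹)^{1/2}`: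
for every `l`,
`(λ_l(Σ̃) minᵢ Wᵢᵢ + 1) minᵢ (DᵢWᵢᵢ + 1)⁻¹ ≤ λ_l(M)
   ≤ (λ_l(Σ̃) maxᵢ Wᵢᵢ + 1) maxᵢ (DᵢWᵢᵢ + 1)⁻¹`.
The decreasingly ordered eigenvalue sequences `μ` of `M` and `ν` of `Σ̃` are characterized
by being antitone and by the factorizations of the characteristic polynomials. -/
theorem vadu_eigenvalue_bounds {n : ℕ}
    (B D W Sinv St Phalf M : Matrix (Fin n) (Fin n) ℝ)
    (d w : Fin n → ℝ) (hd : ∀ i, 0 < d i) (hw : ∀ i, 0 < w i)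
    (hBlow : ∀ i j : Fin n, i < j → B i j = 0) (hBdiag : ∀ i, B i i = 1)
    (hBinv : IsUnit B.det)
    (hD : D = Matrix.diagonal d) (hW : W = Matrix.diagonal w)
    (hSt : St = B⁻¹ * D * (B⁻¹)ᵀ)
    (hSinv : Sinv = Bᵀ * D⁻¹ * B)
    (hP : Phalf = Bᵀ * Matrix.diagonal (fun i => Real.sqrt (w i + (d i)⁻¹)))
    (hM : M = Phalf⁻¹ * (W + Sinv) * (Phalf⁻¹)ᵀ)
    (μ ν : Fin n → ℝ) (hμa : Antitone μ) (hνa : Antitone ν)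
    (hμ : M.charpoly = ∏ i : Fin n, (X - C (μ i)))
    (hν : St.charpoly = ∏ i : Fin n, (X - C (ν i))) :
    ∀ l : Fin n,
      (ν l * (⨅ i, w i) + 1) * (⨅ i, (d i * w i + 1)⁻¹) ≤ μ l ∧
        μ l ≤ (ν l * (⨆ i, w i) + 1) * (⨆ i, (d i * w i + 1)⁻¹) := by
  intro l
  classical
  have hne : Nonempty (Fin n) := ⟨l⟩
  -- scalar facts
  have hd0 : ∀ i, d i ≠ 0 := fun i => ne_of_gt (hd i)
  have he_pos : ∀ i, 0 < (d i * w i + 1)⁻¹ := fun i => by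
    have h1 := hd i; have h2 := hw i; positivity
  have hwd_pos : ∀ i, 0 < w i + (d i)⁻¹ := fun i => by
    have h1 := hd i; have h2 := hw i; positivity
  have hs_pos : ∀ i, 0 < Real.sqrt (w i + (d i)⁻¹) := fun i => Real.sqrt_pos.mpr (hwd_pos i)
  have hs0 : ∀ i, Real.sqrt (w i + (d i)⁻¹) ≠ 0 := fun i => ne_of_gt (hs_pos i)
  have hss : ∀ i, Real.sqrt (w i + (d i)⁻¹) * Real.sqrt (w i + (d i)⁻¹) = w i + (d i)⁻¹ :=
    fun i => Real.mul_self_sqrt (hwd_pos i).le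
  -- sup and inf bounds
  have hc_le : ∀ i, (d i * w i + 1)⁻¹ ≤ ⨆ j, (d j * w j + 1)⁻¹ := fun i =>
    le_ciSup (f := fun j => (d j * w j + 1)⁻¹)
      (Set.Finite.bddAbove (Set.finite_range fun j => (d j * w j + 1)⁻¹)) i
  have ha_le : ∀ i, w i ≤ ⨆ j, w j := fun i =>
    le_ciSup (f := w) (Set.Finite.bddAbove (Set.finite_range w)) i
  have hc'_le : ∀ i, (⨅ j, (d j * w j + 1)⁻¹) ≤ (d i * w i + 1)⁻¹ := fun i =>
    ciInf_le (f := fun j => (d j * w j + 1)⁻¹)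
      (Set.Finite.bddBelow (Set.finite_range fun j => (d j * w j + 1)⁻¹)) i
  have ha'_le : ∀ i, (⨅ j, w j) ≤ w i := fun i =>
    ciInf_le (f := w) (Set.Finite.bddBelow (Set.finite_range w)) i
  have hc_pos : 0 < ⨆ j, (d j * w j + 1)⁻¹ := (he_pos l).trans_le (hc_le l)
  have ha_pos : 0 < ⨆ j, w j := (hw l).trans_le (ha_le l)
  have hc'_pos : 0 < ⨅ j, (d j * w j + 1)⁻¹ := by
    obtain ⟨i0, hi0⟩ := Finite.exists_min (fun j => (d j * w j + 1)⁻¹)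
    exact (he_pos i0).trans_le (le_ciInf hi0)
  have ha'_pos : 0 < ⨅ j, w j := by
    obtain ⟨i0, hi0⟩ := Finite.exists_min w
    exact (hw i0).trans_le (le_ciInf hi0)
  set c : ℝ := ⨆ j, (d j * w j + 1)⁻¹
  set c' : ℝ := ⨅ j, (d j * w j + 1)⁻¹
  set a : ℝ := ⨆ j, w j
  set a' : ℝ := ⨅ j, w j
  have hdw0 : ∀ i, d i * w i + 1 ≠ 0 := fun i => by
    have h1 := hd i; have h2 := hw i; positivity
  -- key entrywise identity
  have hinv_eq : ∀ i, (w i + (d i)⁻¹)⁻¹ = d i * (d i * w i + 1)⁻¹ := fun i => by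
    have h1 : d i ≠ 0 := hd0 i
    have h2 : d i * w i + 1 ≠ 0 := hdw0 i
    refine inv_eq_of_mul_eq_one_right ?_
    have hkey : (w i + (d i)⁻¹) * d i = d i * w i + 1 := by field_simp
    calc (w i + (d i)⁻¹) * (d i * (d i * w i + 1)⁻¹)
        = ((w i + (d i)⁻¹) * d i) * (d i * w i + 1)⁻¹ := by ring
      _ = (d i * w i + 1) * (d i * w i + 1)⁻¹ := by rw [hkey]
      _ = 1 := mul_inv_cancel₀ h2
  -- matrices
  set Si : Matrix (Fin n) (Fin n) ℝ :=
    Matrix.diagonal (fun i => (Real.sqrt (w i + (d i)⁻¹))⁻¹) with hSi_def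
  set Wh : Matrix (Fin n) (Fin n) ℝ := Matrix.diagonal (fun i => Real.sqrt (w i)) with hWh_def
  set S2 : Matrix (Fin n) (Fin n) ℝ :=
    Matrix.diagonal (fun i => (w i + (d i)⁻¹)⁻¹) with hS2_def
  set Emat : Matrix (Fin n) (Fin n) ℝ :=
    Matrix.diagonal (fun i => (d i * w i + 1)⁻¹) with hE_def
  set H : Matrix (Fin n) (Fin n) ℝ := B⁻¹ * Si with hH_def
  set K : Matrix (Fin n) (Fin n) ℝ := Hᵀ * W * H with hK_def
  set T : Matrix (Fin n) (Fin n) ℝ := Wh * B⁻¹ with hT_def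
  set TDT : Matrix (Fin n) (Fin n) ℝ := T * D * Tᵀ with hTDT_def
  set G : Matrix (Fin n) (Fin n) ℝ := Wh * H with hG_def
  -- invertibility facts
  have hBB : B * B⁻¹ = 1 := Matrix.mul_nonsing_inv B hBinv
  have hBtBit : (B⁻¹)ᵀ * Bᵀ = 1 := by rw [← Matrix.transpose_mul, hBB, Matrix.transpose_one]
  have hSit : Siᵀ = Si := by rw [hSi_def, Matrix.diagonal_transpose]
  have hWht : Whᵀ = Wh := by rw [hWh_def, Matrix.diagonal_transpose]
  have hDinv : D⁻¹ = Matrix.diagonal (fun i => (d i)⁻¹) := by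
    apply Matrix.inv_eq_left_inv
    rw [hD, Matrix.diagonal_mul_diagonal,
      show (fun i => (d i)⁻¹ * d i) = fun _ => (1:ℝ) from funext fun i =>
        inv_mul_cancel₀ (hd0 i)]
    exact Matrix.diagonal_one
  have hSinv_diag : (Matrix.diagonal (fun i => Real.sqrt (w i + (d i)⁻¹)))⁻¹ = Si := by
    apply Matrix.inv_eq_left_inv
    rw [hSi_def, Matrix.diagonal_mul_diagonal,
      show (fun i => (Real.sqrt (w i + (d i)⁻¹))⁻¹ * Real.sqrt (w i + (d i)⁻¹))
        = fun _ => (1:ℝ) from funext fun i => inv_mul_cancel₀ (hs0 i)]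
    exact Matrix.diagonal_one
  -- M = K + Emat
  have hPinv : Phalf⁻¹ = Si * (B⁻¹)ᵀ := by
    rw [hP, Matrix.mul_inv_rev, hSinv_diag, ← Matrix.transpose_nonsing_inv]
  have hSDS : Si * (D⁻¹ * Si) = Emat := by
    rw [hDinv, hSi_def, hE_def, Matrix.diagonal_mul_diagonal, Matrix.diagonal_mul_diagonal]
    ext i j
    by_cases hij : i = j
    · subst hij
      simp only [Matrix.diagonal_apply_eq]
      have h1 : d i ≠ 0 := hd0 i
      calc (Real.sqrt (w i + (d i)⁻¹))⁻¹ * ((d i)⁻¹ * (Real.sqrt (w i + (d i)⁻¹))⁻¹)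
          = (Real.sqrt (w i + (d i)⁻¹) * Real.sqrt (w i + (d i)⁻¹))⁻¹ * (d i)⁻¹ := by
            rw [mul_inv]; ring
        _ = (w i + (d i)⁻¹)⁻¹ * (d i)⁻¹ := by rw [hss i]
        _ = (d i * w i + 1)⁻¹ := by
            rw [hinv_eq i, show d i * (d i * w i + 1)⁻¹ * (d i)⁻¹
              = (d i * (d i)⁻¹) * (d i * w i + 1)⁻¹ from by ring, mul_inv_cancel₀ h1, one_mul]
    · simp [Matrix.diagonal_apply_ne _ hij]
  have hMKE : M = K + Emat := by
    rw [hM, hPinv, hSinv]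
    have ht : (Si * (B⁻¹)ᵀ)ᵀ = B⁻¹ * Si := by
      rw [Matrix.transpose_mul, Matrix.transpose_transpose, hSit]
    rw [ht]
    have expand : Si * (B⁻¹)ᵀ * (W + Bᵀ * D⁻¹ * B) * (B⁻¹ * Si)
        = Si * (B⁻¹)ᵀ * W * (B⁻¹ * Si)
          + Si * (((B⁻¹)ᵀ * Bᵀ) * (D⁻¹ * ((B * B⁻¹) * Si))) := by
      noncomm_ring
    rw [expand, hBtBit, hBB, Matrix.one_mul, Matrix.one_mul, hSDS, hK_def, hH_def,
      Matrix.transpose_mul, hSit]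
  -- diagonal multiplication identities
  have hWW : Wh * Wh = W := by
    rw [hWh_def, Matrix.diagonal_mul_diagonal, hW]
    ext i j
    by_cases hij : i = j
    · subst hij
      simp only [Matrix.diagonal_apply_eq]
      exact Real.mul_self_sqrt (hw i).le
    · simp [Matrix.diagonal_apply_ne _ hij]
  have hSiSi : Si * Si = S2 := by
    rw [hSi_def, hS2_def, Matrix.diagonal_mul_diagonal]
    ext i j
    by_cases hij : i = j
    · subst hij
      simp only [Matrix.diagonal_apply_eq]
      rw [← mul_inv, hss i]
    · simp [Matrix.diagonal_apply_ne _ hij]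
  have hHt : Hᵀ = Si * (B⁻¹)ᵀ := by rw [hH_def, Matrix.transpose_mul, hSit]
  have hTt : Tᵀ = (B⁻¹)ᵀ * Wh := by rw [hT_def, Matrix.transpose_mul, hWht]
  -- K = Gᵀ G and G Gᵀ = T S2 Tᵀ
  have hGtG : Gᵀ * G = K := by
    rw [hG_def, hK_def, Matrix.transpose_mul, hWht, ← hWW]
    noncomm_ring
  have hGGt : G * Gᵀ = T * S2 * Tᵀ := by
    rw [hG_def, Matrix.transpose_mul, hHt, hWht, hH_def, hT_def, hTt, ← hSiSi]
    noncomm_ring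
  -- determinant units
  have hdetBi : IsUnit (B⁻¹).det := Matrix.isUnit_nonsing_inv_det B hBinv
  have hdetSi : IsUnit Si.det := by
    rw [hSi_def, Matrix.det_diagonal]
    exact isUnit_iff_ne_zero.mpr (Finset.prod_ne_zero_iff.mpr fun i _ =>
      inv_ne_zero (hs0 i))
  have hdetWh : IsUnit Wh.det := by
    rw [hWh_def, Matrix.det_diagonal]
    exact isUnit_iff_ne_zero.mpr (Finset.prod_ne_zero_iff.mpr fun i _ =>
      ne_of_gt (Real.sqrt_pos.mpr (hw i)))
  have hdetG : IsUnit G.det := by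
    rw [hG_def, hH_def, Matrix.det_mul, Matrix.det_mul]
    exact hdetWh.mul (hdetBi.mul hdetSi)
  -- St is PSD; its square root R
  have hStH : St.IsHermitian := by
    rw [hSt, hD]
    exact VADU.herm_xdt B⁻¹ d
  have hStPSD : St.PosSemidef := by
    rw [hSt, hD]
    have := (VADU.psd_diag (fun i => (hd i).le)).mul_mul_conjTranspose_same B⁻¹
    rwa [Matrix.conjTranspose_eq_transpose_of_trivial] at this
  open scoped MatrixOrder in
  set R : Matrix (Fin n) (Fin n) ℝ := CFC.sqrt St with hR_def
  have hR2 : R * R = St := by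
    open scoped MatrixOrder in
    exact CFC.sqrt_mul_sqrt_self St (Matrix.nonneg_iff_posSemidef.mpr hStPSD)
  have hRH : R.IsHermitian := by
    open scoped MatrixOrder in
    exact (Matrix.nonneg_iff_posSemidef.mp (CFC.sqrt_nonneg St)).isHermitian
  have hRT : Rᵀ = R := VADU.transpose_eq_of_isHermitian hRH
  have hdetSt : IsUnit St.det := by
    rw [hSt, Matrix.det_mul, Matrix.det_mul, hD, Matrix.det_transpose]
    refine (hdetBi.mul ?_).mul hdetBi
    rw [Matrix.det_diagonal]
    exact isUnit_iff_ne_zero.mpr (Finset.prod_ne_zero_iff.mpr fun i _ => hd0 i)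
  have hdetR : IsUnit R.det := by
    have h1 : R.det * R.det = St.det := by rw [← Matrix.det_mul, hR2]
    exact isUnit_of_mul_isUnit_left (h1 ▸ hdetSt)
  clear_value R
  -- TDT = Wh * St * Wh and charpoly swap with R * W * R
  have hTDT_eq : TDT = Wh * St * Wh := by
    rw [hTDT_def, hTt, hT_def, hSt]
    noncomm_ring
  set Xm : Matrix (Fin n) (Fin n) ℝ := Wh * R with hX_def
  have hdetX : IsUnit Xm.det := by
    rw [hX_def, Matrix.det_mul]; exact hdetWh.mul hdetR
  have hXconj : Xm * (R * W * R) * Xm⁻¹ = Wh * St * Wh := by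
    have h1 : R * W * R = (R * Wh) * Xm := by
      rw [hX_def, ← hWW]; noncomm_ring
    have hXX : Xm * Xm⁻¹ = 1 := Matrix.mul_nonsing_inv Xm hdetX
    calc Xm * (R * W * R) * Xm⁻¹ = (Xm * (R * Wh)) * (Xm * Xm⁻¹) := by
          rw [h1]; noncomm_ring
      _ = Xm * (R * Wh) := by rw [hXX, Matrix.mul_one]
      _ = Wh * St * Wh := by rw [hX_def, ← hR2]; noncomm_ring
  have hRWR_char : (R * W * R).charpoly = TDT.charpoly := by
    rw [hTDT_eq, ← hXconj, VADU.charpoly_conj hdetX]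
  -- hermitian certificates
  have hKH : K.IsHermitian := by
    rw [hK_def, hW]
    exact VADU.herm_tdx H w
  have hEH : Emat.IsHermitian := VADU.herm_diag _
  have hMH : M.IsHermitian := by rw [hMKE]; exact VADU.herm_add hKH hEH
  have hGGtH : (G * Gᵀ).IsHermitian := by rw [hGGt, hS2_def]; exact VADU.herm_xdt T _
  have hTDTH : TDT.IsHermitian := by rw [hTDT_def, hD]; exact VADU.herm_xdt T d
  have hRWRH : (R * W * R).IsHermitian := by
    rw [show R * W * R = R * W * Rᵀ from by rw [hRT], hW]
    exact VADU.herm_xdt R w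
  -- sorted eigen-data
  obtain ⟨κ, bK, hκa, hbK, hκc⟩ := VADU.exists_sorted_eigenbasis hKH
  obtain ⟨τ, bT, hτa, hbT, hτc⟩ := VADU.exists_sorted_eigenbasis hTDTH
  obtain ⟨bSt, hbSt⟩ := VADU.eigenbasis_of_charpoly hStH hν
  -- derived charpoly data
  have hGGtc : (G * Gᵀ).charpoly = ∏ i, (X - C (κ i)) := by
    have hconjK : G * K * G⁻¹ = G * Gᵀ := by
      rw [← hGtG]
      calc G * (Gᵀ * G) * G⁻¹ = (G * Gᵀ) * (G * G⁻¹) := by noncomm_ring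
        _ = G * Gᵀ := by rw [Matrix.mul_nonsing_inv G hdetG, Matrix.mul_one]
    rw [← hconjK, VADU.charpoly_conj hdetG, hκc]
  have hRWRc : (R * W * R).charpoly = ∏ i, (X - C (τ i)) := by rw [hRWR_char, hτc]
  have hKc : (K + c • (1 : Matrix (Fin n) (Fin n) ℝ)).charpoly
      = ∏ i, (X - C (κ i + c)) :=
    VADU.charpoly_of_eigenbasis bK _ (fun i => by
      rw [Matrix.add_mulVec, Matrix.smul_mulVec, Matrix.one_mulVec, hbK i, ← add_smul])
  have hKc' : (K + c' • (1 : Matrix (Fin n) (Fin n) ℝ)).charpoly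
      = ∏ i, (X - C (κ i + c')) :=
    VADU.charpoly_of_eigenbasis bK _ (fun i => by
      rw [Matrix.add_mulVec, Matrix.smul_mulVec, Matrix.one_mulVec, hbK i, ← add_smul])
  have hcTDT : (c • TDT).charpoly = ∏ i, (X - C (c * τ i)) :=
    VADU.charpoly_of_eigenbasis bT _ (fun i => by
      rw [Matrix.smul_mulVec, hbT i, smul_smul])
  have hc'TDT : (c' • TDT).charpoly = ∏ i, (X - C (c' * τ i)) :=
    VADU.charpoly_of_eigenbasis bT _ (fun i => by
      rw [Matrix.smul_mulVec, hbT i, smul_smul])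
  have haSt : (a • St).charpoly = ∏ i, (X - C (a * ν i)) :=
    VADU.charpoly_of_eigenbasis bSt _ (fun i => by
      rw [Matrix.smul_mulVec, hbSt i, smul_smul])
  have ha'St : (a' • St).charpoly = ∏ i, (X - C (a' * ν i)) :=
    VADU.charpoly_of_eigenbasis bSt _ (fun i => by
      rw [Matrix.smul_mulVec, hbSt i, smul_smul])
  -- antitonicity of shifted data
  have hκca : Antitone (fun i => κ i + c) := fun i j h => by
    have := hκa h; dsimp only; linarith
  have hκc'a : Antitone (fun i => κ i + c') := fun i j h => by
    have := hκa h; dsimp only; linarith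
  have hcτa : Antitone (fun i => c * τ i) := fun i j h =>
    mul_le_mul_of_nonneg_left (hτa h) hc_pos.le
  have hc'τa : Antitone (fun i => c' * τ i) := fun i j h =>
    mul_le_mul_of_nonneg_left (hτa h) hc'_pos.le
  have haνa : Antitone (fun i => a * ν i) := fun i j h =>
    mul_le_mul_of_nonneg_left (hνa h) ha_pos.le
  have ha'νa : Antitone (fun i => a' * ν i) := fun i j h =>
    mul_le_mul_of_nonneg_left (hνa h) ha'_pos.le
  -- hermitian certificates for shifted matrices
  have hKcH : (K + c • (1 : Matrix (Fin n) (Fin n) ℝ)).IsHermitian :=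
    VADU.herm_add hKH (VADU.herm_smul c Matrix.isHermitian_one)
  have hKc'H : (K + c' • (1 : Matrix (Fin n) (Fin n) ℝ)).IsHermitian :=
    VADU.herm_add hKH (VADU.herm_smul c' Matrix.isHermitian_one)
  have hcTDTH : (c • TDT).IsHermitian := VADU.herm_smul c hTDTH
  have hc'TDTH : (c' • TDT).IsHermitian := VADU.herm_smul c' hTDTH
  have haStH : (a • St).IsHermitian := VADU.herm_smul a hStH
  have ha'StH : (a' • St).IsHermitian := VADU.herm_smul a' hStH
  -- PSD differences
  have psd1 : (K + c • (1 : Matrix (Fin n) (Fin n) ℝ) - M).PosSemidef := by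
    have hdiff : K + c • (1 : Matrix (Fin n) (Fin n) ℝ) - M
        = Matrix.diagonal (fun i => c - (d i * w i + 1)⁻¹) := by
      rw [hMKE, Matrix.smul_one_eq_diagonal, hE_def, ← Matrix.diagonal_sub]
      abel
    rw [hdiff]
    exact VADU.psd_diag (fun i => sub_nonneg.mpr (hc_le i))
  have psd1' : (M - (K + c' • (1 : Matrix (Fin n) (Fin n) ℝ))).PosSemidef := by
    have hdiff : M - (K + c' • (1 : Matrix (Fin n) (Fin n) ℝ))
        = Matrix.diagonal (fun i => (d i * w i + 1)⁻¹ - c') := by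
      rw [hMKE, Matrix.smul_one_eq_diagonal, hE_def, ← Matrix.diagonal_sub]
      abel
    rw [hdiff]
    exact VADU.psd_diag (fun i => sub_nonneg.mpr (hc'_le i))
  have hsmulTDT : ∀ r : ℝ, r • TDT = T * Matrix.diagonal (fun i => r * d i) * Tᵀ := by
    intro r
    have h1 : T * (r • Matrix.diagonal d) * Tᵀ = r • (T * Matrix.diagonal d * Tᵀ) := by
      rw [mul_smul_comm, smul_mul_assoc]
    rw [hTDT_def, hD, ← h1, VADU.smul_diag]
  have psd2 : (c • TDT - G * Gᵀ).PosSemidef := by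
    have hdiff : c • TDT - G * Gᵀ
        = T * Matrix.diagonal (fun i => c * d i - (w i + (d i)⁻¹)⁻¹) * Tᵀ := by
      rw [hsmulTDT c, hGGt, hS2_def, ← Matrix.sub_mul, ← Matrix.mul_sub, Matrix.diagonal_sub]
    rw [hdiff]
    refine VADU.psd_conj (fun i => ?_) T
    rw [hinv_eq i]
    have h1 := hc_le i; have h2 := (hd i).le
    nlinarith
  have psd2' : (G * Gᵀ - c' • TDT).PosSemidef := by
    have hdiff : G * Gᵀ - c' • TDT
        = T * Matrix.diagonal (fun i => (w i + (d i)⁻¹)⁻¹ - c' * d i) * Tᵀ := by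
      rw [hsmulTDT c', hGGt, hS2_def, ← Matrix.sub_mul, ← Matrix.mul_sub, Matrix.diagonal_sub]
    rw [hdiff]
    refine VADU.psd_conj (fun i => ?_) T
    rw [hinv_eq i]
    have h1 := hc'_le i; have h2 := (hd i).le
    nlinarith
  have hsmulSt : ∀ r : ℝ, r • St = R * Matrix.diagonal (fun _ => r) * R := by
    intro r
    rw [← Matrix.smul_one_eq_diagonal, mul_smul_comm, smul_mul_assoc, Matrix.mul_one, hR2]
  have psd3 : (a • St - R * W * R).PosSemidef := by
    have hdiff : a • St - R * W * R = R * Matrix.diagonal (fun i => a - w i) * R := by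
      rw [hsmulSt a, hW, ← Matrix.sub_mul, ← Matrix.mul_sub, Matrix.diagonal_sub]
    rw [hdiff, show R * Matrix.diagonal (fun i => a - w i) * R
        = R * Matrix.diagonal (fun i => a - w i) * Rᵀ from by rw [hRT]]
    exact VADU.psd_conj (fun i => sub_nonneg.mpr (ha_le i)) R
  have psd3' : (R * W * R - a' • St).PosSemidef := by
    have hdiff : R * W * R - a' • St = R * Matrix.diagonal (fun i => w i - a') * R := by
      rw [hsmulSt a', hW, ← Matrix.sub_mul, ← Matrix.mul_sub, Matrix.diagonal_sub]
    rw [hdiff, show R * Matrix.diagonal (fun i => w i - a') * R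
        = R * Matrix.diagonal (fun i => w i - a') * Rᵀ from by rw [hRT]]
    exact VADU.psd_conj (fun i => sub_nonneg.mpr (ha'_le i)) R
  -- the six monotonicity steps
  have step1 : μ l ≤ κ l + c :=
    VADU.sorted_mono hMH hKcH hμa hκca hμ hKc psd1 l
  have step2 : κ l ≤ c * τ l :=
    VADU.sorted_mono hGGtH hcTDTH hκa hcτa hGGtc hcTDT psd2 l
  have step3 : τ l ≤ a * ν l :=
    VADU.sorted_mono hRWRH haStH hτa haνa hRWRc haSt psd3 l
  have low1 : κ l + c' ≤ μ l :=
    VADU.sorted_mono hKc'H hMH hκc'a hμa hKc' hμ psd1' l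
  have low2 : c' * τ l ≤ κ l :=
    VADU.sorted_mono hc'TDTH hGGtH hc'τa hκa hc'TDT hGGtc psd2' l
  have low3 : a' * ν l ≤ τ l :=
    VADU.sorted_mono ha'StH hRWRH ha'νa hτa ha'St hRWRc psd3' l
  constructor
  · calc (ν l * a' + 1) * c' = c' * (a' * ν l) + c' := by ring
      _ ≤ c' * τ l + c' := by
          have := mul_le_mul_of_nonneg_left low3 hc'_pos.le
          linarith
      _ ≤ κ l + c' := by linarith
      _ ≤ μ l := low1
  · calc μ l ≤ κ l + c := step1
      _ ≤ c * τ l + c := by linarith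
      _ ≤ c * (a * ν l) + c := by
          have := mul_le_mul_of_nonneg_left step3 hc_pos.le
          linarith
      _ = (ν l * a + 1) * c := by ring
end

section
/- Let $B \in \mathbb{R}^{n\times n}$ be an invertible lower-triangular matrix with unit diagonal, and let $D, W \in \mathbb{R}^{n\times n}$ be diagonal matrices with strictly positive diagonal entries $D_i$ and $W_{ii}$. Define $\tilde\Sigma^{-1} = B^T D^{-1} B$ and the VADU-preconditioned matrix $M = P^{-1/2}(W + \tilde\Sigma^{-1})P^{-T/2}$ with $P^{1/2} = B^T(W+D^{-1})^{1/2}$. Then the smallest eigenvalue of $M$ satisfies $\lambda_n(M) > \min_i\big((D_i W_{ii}+1)^{-1}\big)$. -/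
open Matrix

private lemma dp_aux {n : ℕ} (A : Matrix (Fin n) (Fin n) ℝ) (a b : Fin n → ℝ) :
    a ⬝ᵥ (A *ᵥ b) = (Aᵀ *ᵥ a) ⬝ᵥ b := by
  rw [Matrix.dotProduct_mulVec, Matrix.mulVec_transpose]

/-- The smallest eigenvalue of the VADU-preconditioned matrix
`M = P^{-1/2}(W + Σ̃⁻¹)P^{-T/2}` with `P½ = Bᵀ(W + D⁻¹)^{1/2}` satisfies
`λₙ(M) > minᵢ (DᵢWᵢᵢ + 1)⁻¹`; equivalently, every eigenvalue of `M` exceeds this bound. -/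
theorem vadu_smallest_eigenvalue_bound {n : ℕ}
    (B D W Sinv Phalf M : Matrix (Fin n) (Fin n) ℝ)
    (d w : Fin n → ℝ) (hd : ∀ i, 0 < d i) (hw : ∀ i, 0 < w i)
    (hBlow : ∀ i j : Fin n, i < j → B i j = 0) (hBdiag : ∀ i, B i i = 1)
    (hBinv : IsUnit B.det)
    (hD : D = Matrix.diagonal d) (hW : W = Matrix.diagonal w)
    (hSinv : Sinv = Bᵀ * D⁻¹ * B)
    (hP : Phalf = Bᵀ * Matrix.diagonal (fun i => Real.sqrt (w i + (d i)⁻¹)))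
    (hM : M = Phalf⁻¹ * (W + Sinv) * (Phalf⁻¹)ᵀ) :
    ∀ (lam : ℝ) (x : Fin n → ℝ), x ≠ 0 → M *ᵥ x = lam • x →
      (⨅ i, (d i * w i + 1)⁻¹) < lam := by
  intro lam x hx heig
  have hn : n ≠ 0 := by
    rintro rfl
    exact hx (funext fun i => i.elim0)
  haveI : Nonempty (Fin n) := Fin.pos_iff_nonempty.mp (Nat.pos_of_ne_zero hn)
  set s : Fin n → ℝ := fun i => Real.sqrt (w i + (d i)⁻¹) with hs
  have hsq : ∀ i, s i * s i = w i + (d i)⁻¹ := fun i =>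
    Real.mul_self_sqrt (by have := hw i; have := hd i; positivity)
  have hspos : ∀ i, 0 < s i := fun i =>
    Real.sqrt_pos.mpr (by have := hw i; have := hd i; positivity)
  have hDinv : D⁻¹ = Matrix.diagonal (fun i => (d i)⁻¹) := by
    apply Matrix.inv_eq_right_inv
    rw [hD, Matrix.diagonal_mul_diagonal]
    convert Matrix.diagonal_one using 2
    exact funext fun i => mul_inv_cancel₀ (hd i).ne'
  have hdetP : IsUnit Phalf.det := by
    rw [hP, Matrix.det_mul, Matrix.det_transpose, Matrix.det_diagonal]
    exact hBinv.mul (isUnit_iff_ne_zero.mpr (Finset.prod_ne_zero_iff.mpr fun i _ => (hspos i).ne'))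
  set u : Fin n → ℝ := (Phalf⁻¹)ᵀ *ᵥ x with hu
  set v : Fin n → ℝ := B *ᵥ u with hv
  have hxu : x = Phalfᵀ *ᵥ u := by
    rw [hu, Matrix.transpose_nonsing_inv, Matrix.mulVec_mulVec,
      Matrix.mul_nonsing_inv _ (by rwa [Matrix.det_transpose]), Matrix.one_mulVec]
  have hxv : ∀ i, x i = s i * v i := by
    intro i
    rw [hxu, hP, Matrix.transpose_mul, Matrix.transpose_transpose,
      Matrix.diagonal_transpose, ← Matrix.mulVec_mulVec, Matrix.mulVec_diagonal]
  have hx2 : x ⬝ᵥ (M *ᵥ x) = lam * (x ⬝ᵥ x) := by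
    rw [heig, dotProduct_smul, smul_eq_mul]
  have hWpart : u ⬝ᵥ (W *ᵥ u) = ∑ i, w i * (u i * u i) := by
    rw [hW, dotProduct]
    refine Finset.sum_congr rfl fun i _ => ?_
    rw [Matrix.mulVec_diagonal]; ring
  have hSpart : u ⬝ᵥ (Sinv *ᵥ u) = ∑ i, (d i)⁻¹ * (v i * v i) := by
    rw [hSinv, ← Matrix.mulVec_mulVec, ← Matrix.mulVec_mulVec, dp_aux,
      Matrix.transpose_transpose, ← hv, hDinv, dotProduct]
    refine Finset.sum_congr rfl fun i _ => ?_
    rw [Matrix.mulVec_diagonal]; ring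
  have hkey : lam * (x ⬝ᵥ x) = (∑ i, w i * (u i * u i)) + ∑ i, (d i)⁻¹ * (v i * v i) := by
    rw [← hx2, hM, ← Matrix.mulVec_mulVec, ← Matrix.mulVec_mulVec, dp_aux, ← hu,
      Matrix.add_mulVec, dotProduct_add, hWpart, hSpart]
  have hvne : v ≠ 0 := by
    intro h
    apply hx
    funext i
    rw [hxv i, h]; simp
  have hune : u ≠ 0 := by
    intro h
    apply hvne
    rw [hv, h, Matrix.mulVec_zero]
  set c : ℝ := ⨅ i, (d i * w i + 1)⁻¹ with hc
  have hcle : ∀ i, c ≤ (d i * w i + 1)⁻¹ := fun i =>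
    ciInf_le (Finite.bddBelow_range _) i
  have hT : x ⬝ᵥ x = ∑ i, (s i * v i) * (s i * v i) := by
    rw [dotProduct]
    exact Finset.sum_congr rfl fun i _ => by rw [hxv i]
  have hTpos : 0 < x ⬝ᵥ x := by
    rw [hT]
    obtain ⟨j, hj⟩ : ∃ j, v j ≠ 0 := Function.ne_iff.mp hvne
    exact Finset.sum_pos' (fun i _ => mul_self_nonneg _)
      ⟨j, Finset.mem_univ j, mul_self_pos.mpr (mul_ne_zero (hspos j).ne' hj)⟩
  have hWpos : 0 < ∑ i, w i * (u i * u i) := by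
    obtain ⟨j, hj⟩ : ∃ j, u j ≠ 0 := Function.ne_iff.mp hune
    exact Finset.sum_pos' (fun i _ => mul_nonneg (hw i).le (mul_self_nonneg _))
      ⟨j, Finset.mem_univ j, mul_pos (hw j) (mul_self_pos.mpr hj)⟩
  have hcT : c * (x ⬝ᵥ x) ≤ ∑ i, (d i)⁻¹ * (v i * v i) := by
    rw [hT, Finset.mul_sum]
    refine Finset.sum_le_sum fun i _ => ?_
    have h1 : c * (s i * v i * (s i * v i)) = (c * (w i + (d i)⁻¹)) * (v i * v i) := by
      rw [← hsq i]; ring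
    rw [h1]
    refine mul_le_mul_of_nonneg_right ?_ (mul_self_nonneg _)
    have hdne : d i ≠ 0 := (hd i).ne'
    have hdwne : d i * w i + 1 ≠ 0 := by have := hd i; have := hw i; positivity
    have h2 : (d i * w i + 1)⁻¹ * (w i + (d i)⁻¹) = (d i)⁻¹ := by
      have he : (w i + (d i)⁻¹) = (d i * w i + 1) * (d i)⁻¹ := by
        rw [add_mul, one_mul, mul_assoc, mul_left_comm, mul_inv_cancel₀ hdne, mul_one]
      rw [he, ← mul_assoc, inv_mul_cancel₀ hdwne, one_mul]
    calc c * (w i + (d i)⁻¹) ≤ (d i * w i + 1)⁻¹ * (w i + (d i)⁻¹) := by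
          refine mul_le_mul_of_nonneg_right (hcle i) ?_
          have := (hw i).le; have := hd i; positivity
      _ = (d i)⁻¹ := h2
  have hlt : c * (x ⬝ᵥ x) < lam * (x ⬝ᵥ x) := by
    rw [hkey]; linarith
  exact (mul_lt_mul_iff_of_pos_right hTpos).mp hlt
end

section
/- Let $B \in \mathbb{R}^{n\times n}$ be an invertible lower-triangular matrix with unit diagonal, and let $D, W \in \mathbb{R}^{n\times n}$ be diagonal matrices with strictly positive diagonal entries. Define $\tilde\Sigma = B^{-1} D B^{-T}$, $\tilde\Sigma^{-1} = B^T D^{-1} B$, and the LVA-preconditioned matrix $M = P^{-1/2}(W + \tilde\Sigma^{-1})P^{-T/2}$ with $P^{1/2} = B^T D^{-1/2}$. Then for every $l$ with $1 \le l \le n$: $\lambda_l(\tilde\Sigma)\min_i(W_{ii}) + 1 \;\le\; \lambda_l(M) \;\le\; \lambda_l(\tilde\Sigma)\max_i(W_{ii}) + 1$, and in particular the smallest eigenvalue satisfies $\lambda_n(M) > 1$. -/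
open Matrix Polynomial

private lemma sum_smul_dot {n : ℕ} {κ : Type} [Fintype κ]
    (g : κ → ℝ) (u : κ → Fin n → ℝ) (v : Fin n → ℝ) :
    (∑ k, g k • u k) ⬝ᵥ v = ∑ k, g k * (u k ⬝ᵥ v) := by
  simp only [dotProduct, Finset.sum_apply, Pi.smul_apply, smul_eq_mul,
    Finset.sum_mul, Finset.mul_sum, mul_assoc]
  exact Finset.sum_comm

private lemma ortho_li {n : ℕ} {κ : Type} [Fintype κ] [DecidableEq κ] {u : κ → Fin n → ℝ}
    (h : ∀ i j, u i ⬝ᵥ u j = if i = j then 1 else 0) : LinearIndependent ℝ u := by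
  rw [Fintype.linearIndependent_iff]
  intro g hg i
  have h2 := congrArg (fun z => z ⬝ᵥ u i) hg
  simp only [sum_smul_dot, h, zero_dotProduct, mul_ite, mul_one, mul_zero,
    Finset.sum_ite_eq', Finset.mem_univ, if_true] at h2
  exact h2

private lemma quad_repr {n : ℕ} {S : Matrix (Fin n) (Fin n) ℝ} {s : Fin n → ℝ}
    {p : Fin n → Fin n → ℝ}
    (hpo : ∀ i j, p i ⬝ᵥ p j = if i = j then 1 else 0)
    (hpe : ∀ i, S *ᵥ p i = s i • p i)
    {κ : Type} [Fintype κ] [DecidableEq κ] {ι : κ → Fin n} (hinj : Function.Injective ι)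
    {x : Fin n → ℝ} (hx : x ∈ Submodule.span ℝ (Set.range fun k => p (ι k))) :
    ∃ c : κ → ℝ, x ⬝ᵥ x = ∑ k, c k ^ 2 ∧ x ⬝ᵥ S *ᵥ x = ∑ k, c k ^ 2 * s (ι k) := by
  obtain ⟨c, hc⟩ := (Submodule.mem_span_range_iff_exists_fun ℝ).mp hx
  have ho : ∀ k k' : κ, p (ι k) ⬝ᵥ p (ι k') = if k = k' then 1 else 0 := by
    intro k k'; simp only [hpo, hinj.eq_iff]
  have hu : ∀ k, p (ι k) ⬝ᵥ x = c k := by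
    intro k
    rw [← hc, dotProduct_comm, sum_smul_dot]
    simp only [ho, mul_ite, mul_one, mul_zero, Finset.sum_ite_eq', Finset.mem_univ, if_true]
  refine ⟨c, ?_, ?_⟩
  · nth_rewrite 1 [← hc]
    rw [sum_smul_dot]
    simp only [hu]
    exact Finset.sum_congr rfl fun k _ => (pow_two _).symm
  · have hSx : S *ᵥ x = ∑ k, (c k * s (ι k)) • p (ι k) := by
      rw [← hc]
      have hlin : S *ᵥ (∑ k, c k • p (ι k)) = ∑ k, c k • (S *ᵥ p (ι k)) := by
        rw [← Matrix.mulVecLin_apply, map_sum]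
        simp only [_root_.map_smul, Matrix.mulVecLin_apply]
      rw [hlin]
      simp only [hpe, smul_smul]
    rw [dotProduct_comm, hSx, sum_smul_dot]
    simp only [hu]
    exact Finset.sum_congr rfl fun k _ => by ring

private lemma eig_le {n : ℕ} {S T : Matrix (Fin n) (Fin n) ℝ} {s t : Fin n → ℝ}
    {p q : Fin n → Fin n → ℝ}
    (hpo : ∀ i j, p i ⬝ᵥ p j = if i = j then 1 else 0)
    (hpe : ∀ i, S *ᵥ p i = s i • p i)
    (hqo : ∀ i j, q i ⬝ᵥ q j = if i = j then 1 else 0)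
    (hqe : ∀ i, T *ᵥ q i = t i • q i)
    (hs : Antitone s) (ht : Antitone t)
    (hq : ∀ x : Fin n → ℝ, x ⬝ᵥ S *ᵥ x ≤ x ⬝ᵥ T *ᵥ x) (l : Fin n) : s l ≤ t l := by
  classical
  set V := Submodule.span ℝ (Set.range fun k : {i : Fin n // i ≤ l} => p k.val) with hV
  set Wm := Submodule.span ℝ (Set.range fun k : {i : Fin n // l ≤ i} => q k.val) with hW
  have ho1 : ∀ k k' : {i : Fin n // i ≤ l}, p k.val ⬝ᵥ p k'.val = if k = k' then 1 else 0 := by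
    intro k k'; simp only [hpo, Subtype.coe_inj]
  have ho2 : ∀ k k' : {i : Fin n // l ≤ i}, q k.val ⬝ᵥ q k'.val = if k = k' then 1 else 0 := by
    intro k k'; simp only [hqo, Subtype.coe_inj]
  have hdim1 : Module.finrank ℝ V = Fintype.card {i : Fin n // i ≤ l} :=
    finrank_span_eq_card (ortho_li ho1)
  have hdim2 : Module.finrank ℝ Wm = Fintype.card {i : Fin n // l ≤ i} :=
    finrank_span_eq_card (ortho_li ho2)
  have hcard : n + 1 ≤ Fintype.card {i : Fin n // i ≤ l} + Fintype.card {i : Fin n // l ≤ i} := by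
    have h1 : (Finset.univ.filter (fun i : Fin n => i ≤ l)) ∪
        (Finset.univ.filter (fun i : Fin n => l ≤ i)) = Finset.univ := by
      ext i; simpa using le_total i l
    have h2 := Finset.card_union_add_card_inter
      (Finset.univ.filter (fun i : Fin n => i ≤ l)) (Finset.univ.filter (fun i : Fin n => l ≤ i))
    rw [h1] at h2
    have h3 : 1 ≤ ((Finset.univ.filter fun i : Fin n => i ≤ l) ∩
        (Finset.univ.filter fun i : Fin n => l ≤ i)).card :=
      Finset.card_pos.mpr ⟨l, by simp⟩
    have h4 : (Finset.univ : Finset (Fin n)).card = n := by simp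
    rw [Fintype.card_subtype, Fintype.card_subtype]
    omega
  have hfin : 0 < Module.finrank ℝ ↥(V ⊓ Wm) := by
    have h5 := Submodule.finrank_sup_add_finrank_inf_eq V Wm
    have h6 : Module.finrank ℝ ↥(V ⊔ Wm) ≤ n := by
      have := Submodule.finrank_le (V ⊔ Wm)
      rwa [Module.finrank_fin_fun] at this
    rw [hdim1, hdim2] at h5
    omega
  haveI := Module.finrank_pos_iff.mp hfin
  obtain ⟨z, hz⟩ := exists_ne (0 : ↥(V ⊓ Wm))
  have hx0 : (z : Fin n → ℝ) ≠ 0 := fun h => hz (Subtype.ext h)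
  obtain ⟨c, hc1, hc2⟩ := quad_repr hpo hpe Subtype.coe_injective
    (Submodule.mem_inf.mp z.2).1
  obtain ⟨c', hc1', hc2'⟩ := quad_repr hqo hqe Subtype.coe_injective
    (Submodule.mem_inf.mp z.2).2
  set x : Fin n → ℝ := (z : Fin n → ℝ)
  have hxx_pos : 0 < x ⬝ᵥ x := by
    refine lt_of_le_of_ne ?_ ?_
    · rw [hc1]; exact Finset.sum_nonneg fun k _ => sq_nonneg _
    · intro h; exact hx0 (dotProduct_self_eq_zero.mp h.symm)
  have hlow : s l * (x ⬝ᵥ x) ≤ x ⬝ᵥ S *ᵥ x := by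
    rw [hc2, hc1, Finset.mul_sum]
    refine Finset.sum_le_sum fun k _ => ?_
    have hk := hs k.2
    calc s l * c k ^ 2 = c k ^ 2 * s l := mul_comm _ _
      _ ≤ c k ^ 2 * s k.val := mul_le_mul_of_nonneg_left hk (sq_nonneg _)
  have hhigh : x ⬝ᵥ T *ᵥ x ≤ t l * (x ⬝ᵥ x) := by
    rw [hc2', hc1', Finset.mul_sum]
    refine Finset.sum_le_sum fun k _ => ?_
    have hk := ht k.2
    calc c' k ^ 2 * t k.val ≤ c' k ^ 2 * t l := mul_le_mul_of_nonneg_left hk (sq_nonneg _)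
      _ = t l * c' k ^ 2 := mul_comm _ _
  have hchain : s l * (x ⬝ᵥ x) ≤ t l * (x ⬝ᵥ x) := (hlow.trans (hq x)).trans hhigh
  rw [mul_comm (s l), mul_comm (t l)] at hchain
  exact le_of_mul_le_mul_left hchain hxx_pos

private lemma charmatrix_eq {n : ℕ} (S : Matrix (Fin n) (Fin n) ℝ) :
    charmatrix S = Matrix.diagonal (fun _ => (X : ℝ[X])) - S.map ⇑(C : ℝ →+* ℝ[X]) := by
  ext i j
  rw [charmatrix_apply]
  simp [Matrix.sub_apply, Matrix.map_apply]

private lemma charpoly_diag {n : ℕ} (v : Fin n → ℝ) :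
    (Matrix.diagonal v).charpoly = ∏ i, (X - C (v i)) := by
  have h : charmatrix (Matrix.diagonal v) = Matrix.diagonal (fun i => (X : ℝ[X]) - C (v i)) := by
    rw [charmatrix_eq]
    ext i j
    by_cases hij : i = j
    · subst hij; simp [Matrix.diagonal_apply_eq, Matrix.map_apply]
    · simp [Matrix.diagonal_apply_ne _ hij, Matrix.map_apply]
  show (charmatrix (Matrix.diagonal v)).det = _
  rw [h, Matrix.det_diagonal]

private lemma charpoly_conj' {n : ℕ} (U V S : Matrix (Fin n) (Fin n) ℝ)
    (h1 : U * V = 1) (h2 : V * U = 1) : (U * S * V).charpoly = S.charpoly := by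
  have hdiag : ∀ (A : Matrix (Fin n) (Fin n) ℝ[X]),
      A * Matrix.diagonal (fun _ => (X : ℝ[X])) = Matrix.diagonal (fun _ => (X : ℝ[X])) * A := by
    intro A; ext i j
    simp [Matrix.mul_diagonal, Matrix.diagonal_mul, mul_comm]
  have hmap1 : U.map ⇑(C : ℝ →+* ℝ[X]) * V.map ⇑(C : ℝ →+* ℝ[X]) = 1 := by
    rw [← Matrix.map_mul, h1]
    exact Matrix.map_one _ (map_zero C) (map_one C)
  have key : charmatrix (U * S * V) =
      U.map ⇑(C : ℝ →+* ℝ[X]) * charmatrix S * V.map ⇑(C : ℝ →+* ℝ[X]) := by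
    rw [charmatrix_eq, charmatrix_eq, Matrix.mul_sub, Matrix.sub_mul]
    congr 1
    · rw [hdiag (U.map ⇑(C : ℝ →+* ℝ[X])), Matrix.mul_assoc, hmap1, Matrix.mul_one]
    · rw [← Matrix.map_mul, ← Matrix.map_mul]
  show (charmatrix (U * S * V)).det = (charmatrix S).det
  rw [key, Matrix.det_mul, Matrix.det_mul, mul_right_comm, ← Matrix.det_mul, hmap1,
    Matrix.det_one, one_mul]

private lemma charpoly_eig {n : ℕ} {S : Matrix (Fin n) (Fin n) ℝ} (hS : S.IsHermitian) :
    S.charpoly = ∏ i, (X - C (hS.eigenvalues i)) := by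
  have hsp := hS.spectral_theorem
  rw [RCLike.ofReal_real_eq_id, Function.id_comp] at hsp
  have h1 : (hS.eigenvectorUnitary : Matrix (Fin n) (Fin n) ℝ) *
      star (hS.eigenvectorUnitary : Matrix (Fin n) (Fin n) ℝ) = 1 :=
    Matrix.mem_unitaryGroup_iff.mp hS.eigenvectorUnitary.2
  have h2 : star (hS.eigenvectorUnitary : Matrix (Fin n) (Fin n) ℝ) *
      (hS.eigenvectorUnitary : Matrix (Fin n) (Fin n) ℝ) = 1 :=
    Matrix.mem_unitaryGroup_iff'.mp hS.eigenvectorUnitary.2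
  calc S.charpoly
      = ((hS.eigenvectorUnitary : Matrix (Fin n) (Fin n) ℝ) * Matrix.diagonal hS.eigenvalues *
        star (hS.eigenvectorUnitary : Matrix (Fin n) (Fin n) ℝ)).charpoly := by exact congrArg Matrix.charpoly hsp
    _ = (Matrix.diagonal hS.eigenvalues).charpoly := charpoly_conj' _ _ _ h1 h2
    _ = ∏ i, (X - C (hS.eigenvalues i)) := charpoly_diag _

private lemma charpoly_multiset {n : ℕ} {S : Matrix (Fin n) (Fin n) ℝ} {f g : Fin n → ℝ}
    (h1 : S.charpoly = ∏ i, (X - C (f i))) (h2 : S.charpoly = ∏ i, (X - C (g i))) :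
    Multiset.map f Finset.univ.val = Multiset.map g Finset.univ.val := by
  have key : ∀ h : Fin n → ℝ,
      (∏ i, (X - C (h i))).roots = Multiset.map h Finset.univ.val := by
    intro h
    rw [Finset.prod_eq_multiset_prod,
      show Multiset.map (fun i => X - C (h i)) Finset.univ.val
        = Multiset.map (fun a => X - C a) (Multiset.map h Finset.univ.val) from
        (Multiset.map_map (fun a => X - C a) h Finset.univ.val).symm]
    exact roots_multiset_prod_X_sub_C _
  have h3 := congrArg Polynomial.roots (h1.symm.trans h2)
  rwa [key f, key g] at h3

private lemma antitone_unique {n : ℕ} {f g : Fin n → ℝ} (hf : Antitone f) (hg : Antitone g)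
    (h : Multiset.map f Finset.univ.val = Multiset.map g Finset.univ.val) : f = g := by
  rw [Fin.univ_val_map, Fin.univ_val_map, Multiset.coe_eq_coe] at h
  haveI : IsAntisymm ℝ (· ≥ ·) := ⟨fun a b h1 h2 => le_antisymm h2 h1⟩
  have hs1 : (List.ofFn f).Pairwise (· ≥ ·) := List.pairwise_ofFn.mpr fun i j hij => hf hij.le
  have hs2 : (List.ofFn g).Pairwise (· ≥ ·) := List.pairwise_ofFn.mpr fun i j hij => hg hij.le
  exact List.ofFn_inj.mp (h.eq_of_pairwise' hs1 hs2)

private lemma exists_eigdata {n : ℕ} {S : Matrix (Fin n) (Fin n) ℝ} (hS : S.IsHermitian)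
    {s : Fin n → ℝ} (hs : Antitone s) (hc : S.charpoly = ∏ i, (X - C (s i))) :
    ∃ p : Fin n → Fin n → ℝ, (∀ i j, p i ⬝ᵥ p j = if i = j then 1 else 0) ∧
      ∀ i, S *ᵥ p i = s i • p i := by
  classical
  set e := hS.eigenvalues with he
  set τ : Equiv.Perm (Fin n) := Fin.revPerm.trans (Tuple.sort e) with hτ
  have hmono := Tuple.monotone_sort e
  have hs' : Antitone fun i => e (τ i) := by
    intro a b hab
    exact hmono (Fin.rev_le_rev.mpr hab)
  have hms : Multiset.map s Finset.univ.val = Multiset.map (fun i => e (τ i)) Finset.univ.val := by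
    rw [charpoly_multiset hc (charpoly_eig hS)]
    rw [show Multiset.map (fun i => e (τ i)) Finset.univ.val
        = Multiset.map e (Multiset.map (⇑τ) Finset.univ.val) from
        (Multiset.map_map e (⇑τ) Finset.univ.val).symm]
    congr 1
    rw [show Multiset.map (⇑τ) Finset.univ.val = (Finset.univ.map τ.toEmbedding).val from rfl,
      Finset.map_univ_equiv]
  have hseq : s = fun i => e (τ i) := antitone_unique hs hs' hms
  refine ⟨fun i => (WithLp.equiv 2 (Fin n → ℝ)) (hS.eigenvectorBasis (τ i)), ?_, ?_⟩
  · intro i j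
    have hon := orthonormal_iff_ite.mp hS.eigenvectorBasis.orthonormal (τ i) (τ j)
    simp only [PiLp.inner_apply, RCLike.inner_apply, starRingEnd_apply, star_trivial] at hon
    have hdp : (WithLp.equiv 2 (Fin n → ℝ)) (hS.eigenvectorBasis (τ i)) ⬝ᵥ
        (WithLp.equiv 2 (Fin n → ℝ)) (hS.eigenvectorBasis (τ j))
        = ∑ k, (hS.eigenvectorBasis (τ i) : EuclideanSpace ℝ (Fin n)) k *
          (hS.eigenvectorBasis (τ j) : EuclideanSpace ℝ (Fin n)) k := rfl
    rw [hdp, Finset.sum_congr rfl fun k _ => mul_comm ((hS.eigenvectorBasis (τ i) : EuclideanSpace ℝ (Fin n)) k) _, hon]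
    by_cases h : i = j
    · subst h; simp
    · rw [if_neg (fun hh => h (τ.injective hh)), if_neg h]
  · intro i
    have hmv := hS.mulVec_eigenvectorBasis (τ i)
    rw [hseq]
    exact hmv

private lemma charpoly_affine {n : ℕ} {G : Matrix (Fin n) (Fin n) ℝ} (hG : G.IsHermitian)
    {ν : Fin n → ℝ} (hGc : G.charpoly = ∏ i, (X - C (ν i))) (a : ℝ) :
    (a • G + 1).charpoly = ∏ i, (X - C (a * ν i + 1)) := by
  classical
  set e := hG.eigenvalues with he
  have hsp := hG.spectral_theorem
  rw [RCLike.ofReal_real_eq_id, Function.id_comp] at hsp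
  set U : Matrix (Fin n) (Fin n) ℝ := (hG.eigenvectorUnitary : Matrix (Fin n) (Fin n) ℝ) with hU
  have h1 : U * star U = 1 := Matrix.mem_unitaryGroup_iff.mp hG.eigenvectorUnitary.2
  have h2 : star U * U = 1 := Matrix.mem_unitaryGroup_iff'.mp hG.eigenvectorUnitary.2
  have hdd : Matrix.diagonal (fun i => a * e i + 1) = a • Matrix.diagonal e + 1 := by
    rw [← Matrix.diagonal_smul, ← Matrix.diagonal_one, Matrix.diagonal_add]
    congr 1
  have key : a • G + 1 = U * Matrix.diagonal (fun i => a * e i + 1) * star U := by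
    rw [hdd, Matrix.mul_add, Matrix.add_mul, Matrix.mul_one, h1, Matrix.mul_smul,
      Matrix.smul_mul, hsp]
    rfl
  rw [key, charpoly_conj' _ _ _ h1 h2, charpoly_diag]
  have hms := charpoly_multiset hGc (charpoly_eig hG)
  rw [Finset.prod_eq_multiset_prod, Finset.prod_eq_multiset_prod,
    show Multiset.map (fun i => X - C (a * e i + 1)) Finset.univ.val
      = Multiset.map (fun r => X - C (a * r + 1)) (Multiset.map e Finset.univ.val) from
      (Multiset.map_map (fun r => X - C (a * r + 1)) e Finset.univ.val).symm,
    show Multiset.map (fun i => X - C (a * ν i + 1)) Finset.univ.val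
      = Multiset.map (fun r => X - C (a * r + 1)) (Multiset.map ν Finset.univ.val) from
      (Multiset.map_map (fun r => X - C (a * r + 1)) ν Finset.univ.val).symm,
    hms]

/-- Eigenvalue bounds for the LVA-preconditioned matrix
`M = P^{-1/2}(W + Σ̃⁻¹)P^{-T/2}` with `P½ = Bᵀ D^{-1/2}`: for every `l`,
`λ_l(Σ̃) minᵢ Wᵢᵢ + 1 ≤ λ_l(M) ≤ λ_l(Σ̃) maxᵢ Wᵢᵢ + 1`, and in particular
the smallest eigenvalue satisfies `λₙ(M) > 1` (indeed every eigenvalue exceeds `1`). -/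
theorem lva_eigenvalue_bounds {n : ℕ}
    (B D W Sinv St Phalf M : Matrix (Fin n) (Fin n) ℝ)
    (d w : Fin n → ℝ) (hd : ∀ i, 0 < d i) (hw : ∀ i, 0 < w i)
    (hBlow : ∀ i j : Fin n, i < j → B i j = 0) (hBdiag : ∀ i, B i i = 1)
    (hBinv : IsUnit B.det)
    (hD : D = Matrix.diagonal d) (hW : W = Matrix.diagonal w)
    (hSt : St = B⁻¹ * D * (B⁻¹)ᵀ)
    (hSinv : Sinv = Bᵀ * D⁻¹ * B)
    (hP : Phalf = Bᵀ * Matrix.diagonal (fun i => Real.sqrt ((d i)⁻¹)))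
    (hM : M = Phalf⁻¹ * (W + Sinv) * (Phalf⁻¹)ᵀ)
    (μ ν : Fin n → ℝ) (hμa : Antitone μ) (hνa : Antitone ν)
    (hμ : M.charpoly = ∏ i : Fin n, (X - C (μ i)))
    (hν : St.charpoly = ∏ i : Fin n, (X - C (ν i))) :
    ∀ l : Fin n,
      (ν l * (⨅ i, w i) + 1 ≤ μ l ∧ μ l ≤ ν l * (⨆ i, w i) + 1) ∧ 1 < μ l := by
  intro l
  classical
  haveI : Nonempty (Fin n) := ⟨l⟩
  have hdne : ∀ i, d i ≠ 0 := fun i => (hd i).ne'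
  have hsq : ∀ i, Real.sqrt (d i) ≠ 0 := fun i => (Real.sqrt_pos.mpr (hd i)).ne'
  set E : Matrix (Fin n) (Fin n) ℝ := Matrix.diagonal (fun i => Real.sqrt (d i)) with hE
  set A : Matrix (Fin n) (Fin n) ℝ := E * (B⁻¹)ᵀ with hA
  have hBB : B * B⁻¹ = 1 := mul_nonsing_inv B hBinv
  have hBB' : B⁻¹ * B = 1 := nonsing_inv_mul B hBinv
  have hDh : (Matrix.diagonal fun i => Real.sqrt ((d i)⁻¹))⁻¹ = E := by
    refine Matrix.inv_eq_right_inv ?_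
    rw [hE, Matrix.diagonal_mul_diagonal,
      show (fun i => Real.sqrt ((d i)⁻¹) * Real.sqrt (d i)) = fun _ : Fin n => (1 : ℝ) from
        funext fun i => by rw [Real.sqrt_inv, inv_mul_cancel₀ (hsq i)],
      Matrix.diagonal_one]
  have hPinv : Phalf⁻¹ = A := by
    rw [hP, Matrix.mul_inv_rev, hDh, ← Matrix.transpose_nonsing_inv]
  have hDinv : D⁻¹ = Matrix.diagonal (fun i => (d i)⁻¹) := by
    rw [hD]
    refine Matrix.inv_eq_right_inv ?_
    rw [Matrix.diagonal_mul_diagonal,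
      show (fun i => d i * (d i)⁻¹) = fun _ : Fin n => (1 : ℝ) from
        funext fun i => mul_inv_cancel₀ (hdne i),
      Matrix.diagonal_one]
  have hBtB : (B⁻¹)ᵀ * Bᵀ = 1 := by
    rw [← Matrix.transpose_mul, hBB, Matrix.transpose_one]
  have hASA : A * Sinv * Aᵀ = 1 := by
    rw [hSinv, hA, hDinv, Matrix.transpose_mul, Matrix.transpose_transpose,
      Matrix.diagonal_transpose]
    simp only [Matrix.mul_assoc]
    rw [← Matrix.mul_assoc B B⁻¹ E, hBB, Matrix.one_mul,
      ← Matrix.mul_assoc (B⁻¹)ᵀ Bᵀ _, hBtB, Matrix.one_mul,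
      Matrix.diagonal_mul_diagonal, Matrix.diagonal_mul_diagonal]
    rw [show (fun i => Real.sqrt (d i) * ((d i)⁻¹ * Real.sqrt (d i))) = fun _ : Fin n => (1 : ℝ)
        from funext fun i => by
          rw [mul_comm ((d i)⁻¹) _, ← mul_assoc, Real.mul_self_sqrt (hd i).le,
            mul_inv_cancel₀ (hdne i)],
      Matrix.diagonal_one]
  have hStA : St = Aᵀ * A := by
    rw [hSt, hA, Matrix.transpose_mul, Matrix.transpose_transpose, Matrix.diagonal_transpose,
      ← hE]
    rw [Matrix.mul_assoc B⁻¹ E (E * (B⁻¹)ᵀ), ← Matrix.mul_assoc E E (B⁻¹)ᵀ, hE,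
      Matrix.diagonal_mul_diagonal,
      show (fun i => Real.sqrt (d i) * Real.sqrt (d i)) = d from
        funext fun i => Real.mul_self_sqrt (hd i).le,
      ← hD, ← Matrix.mul_assoc]
  have hMeq : M = A * W * Aᵀ + 1 := by
    rw [hM, hPinv, Matrix.mul_add, Matrix.add_mul, hASA]
  have hEdet : IsUnit E.det := by
    rw [hE, Matrix.det_diagonal]
    exact isUnit_iff_ne_zero.mpr (Finset.prod_ne_zero_iff.mpr fun i _ => hsq i)
  have hBidet : IsUnit (B⁻¹)ᵀ.det := by
    rw [Matrix.det_transpose, Matrix.det_nonsing_inv, Ring.inverse_eq_inv']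
    exact isUnit_iff_ne_zero.mpr (inv_ne_zero (isUnit_iff_ne_zero.mp hBinv))
  have hAdet : IsUnit A.det := by
    rw [hA, Matrix.det_mul]
    exact hEdet.mul hBidet
  have hAA : A * A⁻¹ = 1 := mul_nonsing_inv A hAdet
  have hAA' : A⁻¹ * A = 1 := nonsing_inv_mul A hAdet
  set G : Matrix (Fin n) (Fin n) ℝ := A * Aᵀ with hG
  have hGc : G.charpoly = ∏ i, (X - C (ν i)) := by
    have hconj : G = A * St * A⁻¹ := by
      rw [hStA, ← Matrix.mul_assoc, Matrix.mul_assoc (A * Aᵀ) A A⁻¹, hAA, Matrix.mul_one]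
    rw [hconj, charpoly_conj' A A⁻¹ St hAA hAA', hν]
  have hWH : W.IsHermitian := by rw [hW]; exact Matrix.isHermitian_diagonal _
  have hABH : (A * W * Aᵀ).IsHermitian := by
    have h := Matrix.isHermitian_mul_mul_conjTranspose A hWH
    rwa [Matrix.conjTranspose_eq_transpose_of_trivial] at h
  have hMH : M.IsHermitian := by
    rw [hMeq]; exact hABH.add Matrix.isHermitian_one
  have hGH : G.IsHermitian := by
    have h := Matrix.isHermitian_mul_mul_conjTranspose A
      (Matrix.isHermitian_one (n := Fin n) (α := ℝ))
    rwa [Matrix.conjTranspose_eq_transpose_of_trivial, Matrix.mul_one] at h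
  have hbdd : BddBelow (Set.range w) := (Set.finite_range w).bddBelow
  have hbdda : BddAbove (Set.range w) := (Set.finite_range w).bddAbove
  have hwmin_le : ∀ i, (⨅ i, w i) ≤ w i := fun i => ciInf_le hbdd i
  have hle_wmax : ∀ i, w i ≤ (⨆ i, w i) := fun i => le_ciSup hbdda i
  have hwmin_pos : 0 < ⨅ i, w i := by
    obtain ⟨j, -, hj⟩ := Finset.exists_min_image Finset.univ w ⟨l, Finset.mem_univ l⟩
    exact lt_of_lt_of_le (hw j) (le_ciInf fun i => hj i (Finset.mem_univ i))
  have hwmax_nonneg : 0 ≤ ⨆ i, w i := (hw l).le.trans (hle_wmax l)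
  have hquadM : ∀ x : Fin n → ℝ,
      x ⬝ᵥ M *ᵥ x = (Aᵀ *ᵥ x) ⬝ᵥ W *ᵥ (Aᵀ *ᵥ x) + x ⬝ᵥ x := by
    intro x
    rw [hMeq, Matrix.add_mulVec, Matrix.one_mulVec, dotProduct_add]
    congr 1
    rw [← Matrix.mulVec_mulVec, ← Matrix.mulVec_mulVec, Matrix.dotProduct_mulVec x A,
      ← Matrix.mulVec_transpose]
  have hquadG : ∀ x : Fin n → ℝ, x ⬝ᵥ G *ᵥ x = (Aᵀ *ᵥ x) ⬝ᵥ (Aᵀ *ᵥ x) := by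
    intro x
    rw [hG, ← Matrix.mulVec_mulVec, Matrix.dotProduct_mulVec x A, ← Matrix.mulVec_transpose]
  have hS1c := charpoly_affine hGH hGc (⨅ i, w i)
  have hS2c := charpoly_affine hGH hGc (⨆ i, w i)
  have hsmulH : ∀ c : ℝ, (c • G + 1).IsHermitian := fun c => by
    have h1 : (c • G).IsHermitian := by
      show _ᴴ = _
      rw [Matrix.conjTranspose_smul, star_trivial, hGH.eq]
    exact h1.add Matrix.isHermitian_one
  have hν1a : Antitone fun i => (⨅ i, w i) * ν i + 1 := fun a b hab =>
    add_le_add_left (mul_le_mul_of_nonneg_left (hνa hab) hwmin_pos.le) 1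
  have hν2a : Antitone fun i => (⨆ i, w i) * ν i + 1 := fun a b hab =>
    add_le_add_left (mul_le_mul_of_nonneg_left (hνa hab) hwmax_nonneg) 1
  obtain ⟨pM, hpoM, hpeM⟩ := exists_eigdata hMH hμa hμ
  obtain ⟨p1, hpo1, hpe1⟩ := exists_eigdata (hsmulH (⨅ i, w i)) hν1a hS1c
  obtain ⟨p2, hpo2, hpe2⟩ := exists_eigdata (hsmulH (⨆ i, w i)) hν2a hS2c
  have hWdot : ∀ y : Fin n → ℝ, y ⬝ᵥ W *ᵥ y = ∑ i, w i * (y i * y i) := by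
    intro y
    rw [hW]
    refine Finset.sum_congr rfl fun i _ => ?_
    rw [Matrix.mulVec_diagonal]
    ring
  have hydot : ∀ y : Fin n → ℝ, y ⬝ᵥ y = ∑ i, y i * y i := fun y => rfl
  have hq1 : ∀ x : Fin n → ℝ, x ⬝ᵥ ((⨅ i, w i) • G + 1) *ᵥ x ≤ x ⬝ᵥ M *ᵥ x := by
    intro x
    rw [hquadM x, Matrix.add_mulVec, Matrix.one_mulVec, dotProduct_add,
      Matrix.smul_mulVec, dotProduct_smul, hquadG x]
    apply add_le_add_left
    rw [smul_eq_mul, hWdot, hydot, Finset.mul_sum]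
    exact Finset.sum_le_sum fun i _ => mul_le_mul_of_nonneg_right (hwmin_le i) (mul_self_nonneg _)
  have hq2 : ∀ x : Fin n → ℝ, x ⬝ᵥ M *ᵥ x ≤ x ⬝ᵥ ((⨆ i, w i) • G + 1) *ᵥ x := by
    intro x
    rw [hquadM x, Matrix.add_mulVec, Matrix.one_mulVec, dotProduct_add,
      Matrix.smul_mulVec, dotProduct_smul, hquadG x]
    apply add_le_add_left
    rw [smul_eq_mul, hWdot, hydot, Finset.mul_sum]
    exact Finset.sum_le_sum fun i _ => mul_le_mul_of_nonneg_right (hle_wmax i) (mul_self_nonneg _)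
  have hlow := eig_le hpo1 hpe1 hpoM hpeM hν1a hμa hq1 l
  have hhigh := eig_le hpoM hpeM hpo2 hpe2 hμa hν2a hq2 l
  have hνpos : 0 < ν l := by
    have hStPD : St.PosDef := by
      refine Matrix.PosDef.of_dotProduct_mulVec_pos ?_ ?_
      · rw [hStA]
        have h := Matrix.isHermitian_mul_mul_conjTranspose Aᵀ
          (Matrix.isHermitian_one (n := Fin n) (α := ℝ))
        rwa [Matrix.mul_one, Matrix.conjTranspose_eq_transpose_of_trivial,
          Matrix.transpose_transpose] at h
      · intro x hx
        have hAx : A *ᵥ x ≠ 0 := by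
          intro h
          apply hx
          have h2 := congrArg (fun v => A⁻¹ *ᵥ v) h
          simpa [Matrix.mulVec_mulVec, hAA', Matrix.one_mulVec, Matrix.mulVec_zero] using h2
        have hform : star x ⬝ᵥ (St *ᵥ x) = (A *ᵥ x) ⬝ᵥ (A *ᵥ x) := by
          rw [star_trivial, hStA, ← Matrix.mulVec_mulVec, Matrix.dotProduct_mulVec x Aᵀ,
            ← Matrix.mulVec_transpose, Matrix.transpose_transpose]
        rw [hform]
        refine lt_of_le_of_ne (Finset.sum_nonneg fun i _ => mul_self_nonneg _) ?_
        intro h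
        exact hAx (dotProduct_self_eq_zero.mp h.symm)
    have hms := charpoly_multiset hν (charpoly_eig hStPD.isHermitian)
    have hmem : ν l ∈ Multiset.map ν Finset.univ.val :=
      Multiset.mem_map_of_mem ν (Finset.mem_univ_val l)
    rw [hms] at hmem
    obtain ⟨i, -, hi⟩ := Multiset.mem_map.mp hmem
    rw [← hi]
    exact hStPD.eigenvalues_pos i
  refine ⟨⟨?_, ?_⟩, ?_⟩
  · rw [mul_comm]; exact hlow
  · rw [mul_comm]; exact hhigh
  · have hpos : 0 < (⨅ i, w i) * ν l := mul_pos hwmin_pos hνpos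
    linarith
end

section
/- Let $B \in \mathbb{R}^{n\times n}$ be an invertible lower-triangular matrix with unit diagonal, and let $D, W \in \mathbb{R}^{n\times n}$ be diagonal matrices with strictly positive diagonal entries $D_i$ and $W_{ii}$. Define $\tilde\Sigma = B^{-1} D B^{-T}$, $\tilde\Sigma^{-1} = B^T D^{-1} B$, and the VADU-preconditioned matrix $M = P^{-1/2}(W + \tilde\Sigma^{-1})P^{-T/2}$ with $P^{1/2} = B^T(W+D^{-1})^{1/2}$. Then the condition number of $M$ is bounded as $\frac{\lambda_1(M)}{\lambda_n(M)} \le \frac{(\lambda_1(\tilde\Sigma)\max_i(W_{ii}) + 1)\,\max_i((D_i W_{ii}+1)^{-1})}{(\lambda_n(\tilde\Sigma)\min_i(W_{ii}) + 1)\,\min_i((D_i W_{ii}+1)^{-1})}$. -/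
open Matrix Polynomial

section Helpers

variable {k : Type*} [Fintype k] [DecidableEq k]

private lemma eval_charpoly'' (M : Matrix k k ℝ) (t : ℝ) :
    M.charpoly.eval t = (Matrix.diagonal (fun _ => t) - M).det := by
  unfold Matrix.charpoly
  rw [← Polynomial.coe_evalRingHom, RingHom.map_det]
  congr 1
  ext i j
  by_cases h : i = j
  · subst h
    simp [Matrix.charmatrix_apply_eq]
  · simp [Matrix.charmatrix_apply_ne _ _ _ h, Matrix.diagonal_apply_ne _ h]

private lemma exists_eigvec (M : Matrix k k ℝ) (t : ℝ) (h : M.charpoly.eval t = 0) :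
    ∃ v, v ≠ 0 ∧ M *ᵥ v = t • v := by
  rw [eval_charpoly''] at h
  obtain ⟨v, hv0, hv⟩ := (Matrix.exists_mulVec_eq_zero_iff).mpr h
  refine ⟨v, hv0, ?_⟩
  rw [Matrix.sub_mulVec] at hv
  have hdiag : Matrix.diagonal (fun _ => t) *ᵥ v = t • v := by
    funext i; simp [Matrix.mulVec_diagonal]
  rw [hdiag] at hv
  linear_combination (norm := module) -hv

private lemma root_of_eigvec (M : Matrix k k ℝ) (t : ℝ) (v : k → ℝ) (hv0 : v ≠ 0)
    (hv : M *ᵥ v = t • v) : M.charpoly.eval t = 0 := by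
  rw [eval_charpoly'']
  refine (Matrix.exists_mulVec_eq_zero_iff).mp ⟨v, hv0, ?_⟩
  rw [Matrix.sub_mulVec, hv]
  have hdiag : Matrix.diagonal (fun _ => t) *ᵥ v = t • v := by
    funext i; simp [Matrix.mulVec_diagonal]
  rw [hdiag, sub_self]

private lemma dot_self_nonneg (v : k → ℝ) : 0 ≤ v ⬝ᵥ v :=
  Finset.sum_nonneg fun _ _ => mul_self_nonneg _

private lemma mulVec_ne_zero (A : Matrix k k ℝ) (hA : IsUnit A.det) {v : k → ℝ}
    (hv : v ≠ 0) : A *ᵥ v ≠ 0 := by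
  intro h0
  apply hv
  have h1 : A⁻¹ *ᵥ (A *ᵥ v) = A⁻¹ *ᵥ (0 : k → ℝ) := by rw [h0]
  rwa [Matrix.mulVec_mulVec, Matrix.nonsing_inv_mul _ hA, Matrix.one_mulVec,
    Matrix.mulVec_zero] at h1

private lemma sum_mul_sq_pos {c q : k → ℝ} (hc : ∀ i, 0 < c i) (hq : q ≠ 0) :
    0 < ∑ i, c i * q i ^ 2 := by
  obtain ⟨j, hj⟩ := Function.ne_iff.mp hq
  refine Finset.sum_pos' (fun i _ => mul_nonneg (hc i).le (sq_nonneg _))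
    ⟨j, Finset.mem_univ j, mul_pos (hc j) ?_⟩
  exact lt_of_le_of_ne (sq_nonneg _) (Ne.symm (pow_ne_zero 2 hj))

private lemma opbound (A : Matrix k k ℝ) (c : ℝ) (hc : 0 ≤ c)
    (h : ∀ v, (A *ᵥ v) ⬝ᵥ (A *ᵥ v) ≤ c * (v ⬝ᵥ v)) (s : k → ℝ) :
    (Aᵀ *ᵥ s) ⬝ᵥ (Aᵀ *ᵥ s) ≤ c * (s ⬝ᵥ s) := by
  set u := Aᵀ *ᵥ s with hu
  have h1 : u ⬝ᵥ u = s ⬝ᵥ (A *ᵥ u) := by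
    rw [hu, Matrix.mulVec_transpose, ← dotProduct_mulVec]
  have hcs : (s ⬝ᵥ (A *ᵥ u)) ^ 2 ≤ (s ⬝ᵥ s) * ((A *ᵥ u) ⬝ᵥ (A *ᵥ u)) := by
    have := Finset.sum_mul_sq_le_sq_mul_sq Finset.univ s (A *ᵥ u)
    simpa [dotProduct, sq, Finset.mul_sum, mul_pow] using this
  have key : (u ⬝ᵥ u) ^ 2 ≤ (s ⬝ᵥ s) * (c * (u ⬝ᵥ u)) := by
    calc (u ⬝ᵥ u) ^ 2 = (s ⬝ᵥ (A *ᵥ u)) ^ 2 := by rw [h1]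
      _ ≤ (s ⬝ᵥ s) * ((A *ᵥ u) ⬝ᵥ (A *ᵥ u)) := hcs
      _ ≤ (s ⬝ᵥ s) * (c * (u ⬝ᵥ u)) :=
          mul_le_mul_of_nonneg_left (h u) (dot_self_nonneg s)
  rcases (dot_self_nonneg u).lt_or_eq with hpos | hzero
  · nlinarith [hpos]
  · rw [← hzero]
    exact mul_nonneg hc (dot_self_nonneg s)

private lemma oplower (A : Matrix k k ℝ) (hA : IsUnit A.det) (a : ℝ) (ha : 0 < a)
    (h : ∀ v, a * (v ⬝ᵥ v) ≤ (A *ᵥ v) ⬝ᵥ (A *ᵥ v)) (s : k → ℝ) :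
    a * (s ⬝ᵥ s) ≤ (Aᵀ *ᵥ s) ⬝ᵥ (Aᵀ *ᵥ s) := by
  have hinv : ∀ u, (A⁻¹ *ᵥ u) ⬝ᵥ (A⁻¹ *ᵥ u) ≤ a⁻¹ * (u ⬝ᵥ u) := by
    intro u
    have h2 := h (A⁻¹ *ᵥ u)
    rw [Matrix.mulVec_mulVec, Matrix.mul_nonsing_inv _ hA, Matrix.one_mulVec] at h2
    rw [← mul_le_mul_iff_right₀ ha, ← mul_assoc, mul_inv_cancel₀ ha.ne', one_mul]
    exact h2
  have hT := opbound A⁻¹ a⁻¹ (inv_nonneg.mpr ha.le) hinv (Aᵀ *ᵥ s)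
  rw [Matrix.mulVec_mulVec, ← Matrix.transpose_mul, Matrix.mul_nonsing_inv _ hA,
    Matrix.transpose_one, Matrix.one_mulVec] at hT
  calc a * (s ⬝ᵥ s) ≤ a * (a⁻¹ * ((Aᵀ *ᵥ s) ⬝ᵥ (Aᵀ *ᵥ s))) :=
        mul_le_mul_of_nonneg_left hT ha.le
    _ = (Aᵀ *ᵥ s) ⬝ᵥ (Aᵀ *ᵥ s) := by field_simp

private lemma herm_quad (S : Matrix k k ℝ) (hS : S.IsHermitian) (lo hi : ℝ)
    (h : ∀ t, S.charpoly.eval t = 0 → lo ≤ t ∧ t ≤ hi) (v : k → ℝ) :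
    lo * (v ⬝ᵥ v) ≤ v ⬝ᵥ (S *ᵥ v) ∧ v ⬝ᵥ (S *ᵥ v) ≤ hi * (v ⬝ᵥ v) := by
  set U : Matrix k k ℝ := (hS.eigenvectorUnitary : Matrix k k ℝ) with hUdef
  have hU1 : U * star U = 1 := (Matrix.mem_unitaryGroup_iff).mp hS.eigenvectorUnitary.2
  have hstar : star U = Uᵀ := by
    rw [Matrix.star_eq_conjTranspose, Matrix.conjTranspose_eq_transpose_of_trivial]
  have hspec : S = U * Matrix.diagonal hS.eigenvalues * Uᵀ := by
    have := hS.spectral_theorem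
    rwa [Unitary.conjStarAlgAut_apply, RCLike.ofReal_real_eq_id, Function.id_comp, ← hUdef, hstar] at this
  have heig : ∀ i, lo ≤ hS.eigenvalues i ∧ hS.eigenvalues i ≤ hi := by
    intro i
    refine h _ (root_of_eigvec S (hS.eigenvalues i) (hS.eigenvectorBasis i) ?_ ?_)
    · exact fun h0 => hS.eigenvectorBasis.orthonormal.ne_zero i (by ext j; simpa using congrFun h0 j)
    · exact hS.mulVec_eigenvectorBasis i
  set y := Uᵀ *ᵥ v with hy
  have hform : v ⬝ᵥ (S *ᵥ v) = ∑ i, hS.eigenvalues i * y i ^ 2 := by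
    calc v ⬝ᵥ (S *ᵥ v) = v ⬝ᵥ ((U * Matrix.diagonal hS.eigenvalues * Uᵀ) *ᵥ v) := by
          rw [← hspec]
      _ = v ⬝ᵥ (U *ᵥ (Matrix.diagonal hS.eigenvalues *ᵥ y)) := by
          rw [hy, Matrix.mulVec_mulVec, Matrix.mulVec_mulVec]
      _ = y ⬝ᵥ (Matrix.diagonal hS.eigenvalues *ᵥ y) := by
          rw [dotProduct_mulVec, ← Matrix.mulVec_transpose, ← hy]
      _ = ∑ i, hS.eigenvalues i * y i ^ 2 := by
          simp only [dotProduct, Matrix.mulVec_diagonal, sq]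
          exact Finset.sum_congr rfl fun i _ => by ring
  have hnorm : y ⬝ᵥ y = v ⬝ᵥ v := by
    rw [hy, dotProduct_mulVec, Matrix.vecMul_transpose, Matrix.mulVec_mulVec,
      ← hstar, hU1, Matrix.one_mulVec]
  have hdot : y ⬝ᵥ y = ∑ i, y i ^ 2 := by simp [dotProduct, sq]
  constructor
  · rw [hform, ← hnorm, hdot, Finset.mul_sum]
    exact Finset.sum_le_sum fun i _ =>
      mul_le_mul_of_nonneg_right (heig i).1 (sq_nonneg _)
  · rw [hform, ← hnorm, hdot, Finset.mul_sum]
    exact Finset.sum_le_sum fun i _ =>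
      mul_le_mul_of_nonneg_right (heig i).2 (sq_nonneg _)

end Helpers

/-- Condition number bound for the VADU-preconditioned matrix
`M = P^{-1/2}(W + Σ̃⁻¹)P^{-T/2}` with `P½ = Bᵀ(W + D⁻¹)^{1/2}`:
`λ₁(M)/λₙ(M) ≤ ((λ₁(Σ̃) maxᵢ Wᵢᵢ + 1) maxᵢ (DᵢWᵢᵢ+1)⁻¹)
             / ((λₙ(Σ̃) minᵢ Wᵢᵢ + 1) minᵢ (DᵢWᵢᵢ+1)⁻¹)`.
`μ` and `ν` are the decreasingly ordered eigenvalue sequences of `M` and `Σ̃`,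
so `λ₁ = μ 0` and `λₙ = μ (Fin.last n)`. -/
theorem vadu_condition_number_bound {n : ℕ}
    (B D W Sinv St Phalf M : Matrix (Fin (n + 1)) (Fin (n + 1)) ℝ)
    (d w : Fin (n + 1) → ℝ) (hd : ∀ i, 0 < d i) (hw : ∀ i, 0 < w i)
    (hBlow : ∀ i j : Fin (n + 1), i < j → B i j = 0) (hBdiag : ∀ i, B i i = 1)
    (hBinv : IsUnit B.det)
    (hD : D = Matrix.diagonal d) (hW : W = Matrix.diagonal w)
    (hSt : St = B⁻¹ * D * (B⁻¹)ᵀ)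
    (hSinv : Sinv = Bᵀ * D⁻¹ * B)
    (hP : Phalf = Bᵀ * Matrix.diagonal (fun i => Real.sqrt (w i + (d i)⁻¹)))
    (hM : M = Phalf⁻¹ * (W + Sinv) * (Phalf⁻¹)ᵀ)
    (μ ν : Fin (n + 1) → ℝ) (hμa : Antitone μ) (hνa : Antitone ν)
    (hμ : M.charpoly = ∏ i : Fin (n + 1), (X - C (μ i)))
    (hν : St.charpoly = ∏ i : Fin (n + 1), (X - C (ν i))) :
    μ 0 / μ (Fin.last n) ≤
      ((ν 0 * (⨆ i, w i) + 1) * (⨆ i, (d i * w i + 1)⁻¹)) /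
        ((ν (Fin.last n) * (⨅ i, w i) + 1) * (⨅ i, (d i * w i + 1)⁻¹)) := by
  classical
  -- basic defs
  set e : Fin (n + 1) → ℝ := fun i => Real.sqrt (w i + (d i)⁻¹) with he
  have hepos : ∀ i, 0 < e i := fun i =>
    Real.sqrt_pos.mpr (add_pos (hw i) (inv_pos.mpr (hd i)))
  have hesq : ∀ i, e i ^ 2 = w i + (d i)⁻¹ := fun i =>
    Real.sq_sqrt (add_pos (hw i) (inv_pos.mpr (hd i))).le
  set sd : Fin (n + 1) → ℝ := fun i => Real.sqrt (d i) with hsd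
  have hsdpos : ∀ i, 0 < sd i := fun i => Real.sqrt_pos.mpr (hd i)
  have hsdsq : ∀ i, sd i ^ 2 = d i := fun i => Real.sq_sqrt (hd i).le
  set sw : Fin (n + 1) → ℝ := fun i => Real.sqrt (w i) with hsw
  have hswpos : ∀ i, 0 < sw i := fun i => Real.sqrt_pos.mpr (hw i)
  have hswsq : ∀ i, sw i ^ 2 = w i := fun i => Real.sq_sqrt (hw i).le
  -- invertibility
  have hPdet : IsUnit Phalf.det := by
    rw [hP, Matrix.det_mul, Matrix.det_transpose, Matrix.det_diagonal]
    exact hBinv.mul (isUnit_iff_ne_zero.mpr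
      (Finset.prod_ne_zero_iff.mpr fun i _ => (hepos i).ne'))
  have hBidet : IsUnit (B⁻¹).det := by
    refine IsUnit.of_mul_eq_one B.det ?_
    rw [← Matrix.det_mul, Matrix.nonsing_inv_mul _ hBinv, Matrix.det_one]
  have hBitdet : IsUnit ((B⁻¹)ᵀ).det := by rwa [Matrix.det_transpose]
  -- St hermitian
  have hSth : St.IsHermitian := by
    rw [Matrix.IsHermitian, Matrix.conjTranspose_eq_transpose_of_trivial, hSt, hD]
    simp [Matrix.transpose_mul, Matrix.diagonal_transpose, Matrix.mul_assoc]
  -- quadratic form of St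
  have hStform : ∀ u : Fin (n + 1) → ℝ,
      u ⬝ᵥ (St *ᵥ u) = ∑ i, d i * (((B⁻¹)ᵀ *ᵥ u) i) ^ 2 := by
    intro u
    calc u ⬝ᵥ (St *ᵥ u) = u ⬝ᵥ (B⁻¹ *ᵥ (D *ᵥ ((B⁻¹)ᵀ *ᵥ u))) := by
          rw [hSt, ← Matrix.mulVec_mulVec, ← Matrix.mulVec_mulVec]
      _ = ((B⁻¹)ᵀ *ᵥ u) ⬝ᵥ (D *ᵥ ((B⁻¹)ᵀ *ᵥ u)) := by
          rw [dotProduct_mulVec, ← Matrix.mulVec_transpose]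
      _ = ∑ i, d i * (((B⁻¹)ᵀ *ᵥ u) i) ^ 2 := by
          rw [hD]
          simp only [dotProduct, Matrix.mulVec_diagonal]
          exact Finset.sum_congr rfl fun i _ => by ring
  -- roots of St's charpoly are between ν last and ν 0
  have hroot : ∀ t, St.charpoly.eval t = 0 → ν (Fin.last n) ≤ t ∧ t ≤ ν 0 := by
    intro t ht
    rw [hν] at ht
    simp only [Polynomial.eval_prod, Polynomial.eval_sub, Polynomial.eval_X,
      Polynomial.eval_C] at ht
    obtain ⟨i, -, hi⟩ := Finset.prod_eq_zero_iff.mp ht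
    have hti : t = ν i := by linarith [sub_eq_zero.mp hi]
    exact ⟨hti ▸ hνa (Fin.le_last i), hti ▸ hνa (Fin.zero_le i)⟩
  -- ν last is positive
  have hνlast_root : St.charpoly.eval (ν (Fin.last n)) = 0 := by
    rw [hν]
    simp only [Polynomial.eval_prod, Polynomial.eval_sub, Polynomial.eval_X,
      Polynomial.eval_C]
    exact Finset.prod_eq_zero (Finset.mem_univ (Fin.last n)) (by ring)
  have hνlast_pos : 0 < ν (Fin.last n) := by
    obtain ⟨v0, hv00, hv0e⟩ := exists_eigvec St _ hνlast_root
    have hq0 : (B⁻¹)ᵀ *ᵥ v0 ≠ 0 := mulVec_ne_zero _ hBitdet hv00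
    have h2 : 0 < v0 ⬝ᵥ (St *ᵥ v0) := by
      rw [hStform]; exact sum_mul_sq_pos hd hq0
    have h1 : v0 ⬝ᵥ (St *ᵥ v0) = ν (Fin.last n) * (v0 ⬝ᵥ v0) := by
      rw [hv0e, dotProduct_smul, smul_eq_mul]
    have h3 : 0 < v0 ⬝ᵥ v0 :=
      (dot_self_nonneg v0).lt_of_ne' (fun h => hv00 (dotProduct_self_eq_zero.mp h))
    nlinarith
  have hν0_pos : 0 < ν 0 := lt_of_lt_of_le hνlast_pos (hνa (Fin.zero_le _))
  have hStquad := herm_quad St hSth (ν (Fin.last n)) (ν 0) hroot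
  -- sup/inf facts for w
  have hsupw : ∀ i, w i ≤ ⨆ j, w j := fun i => le_ciSup (Finite.bddAbove_range _) i
  have hinfw_le : ∀ i, (⨅ j, w j) ≤ w i := fun i => ciInf_le (Finite.bddBelow_range _) i
  have hinfw_pos : 0 < ⨅ i, w i := by
    obtain ⟨j, hj⟩ := Finite.exists_min w
    have hj2 : (⨅ i, w i) = w j :=
      le_antisymm (ciInf_le (Finite.bddBelow_range _) j) (le_ciInf hj)
    rw [hj2]; exact hw j
  have hsupw_pos : 0 < ⨆ i, w i := lt_of_lt_of_le (hw 0) (hsupw 0)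
  -- Pf facts
  set Pf : Fin (n + 1) → ℝ := fun i => d i * w i + 1 with hPfdef
  have hPfpos : ∀ i, 0 < Pf i := fun i => by
    have := mul_pos (hd i) (hw i); simp only [hPfdef]; linarith
  set supP : ℝ := ⨆ i, (Pf i)⁻¹ with hsupPdef
  set infP : ℝ := ⨅ i, (Pf i)⁻¹ with hinfPdef
  have hsupP_pos : 0 < supP := by
    rw [hsupPdef]
    exact lt_of_lt_of_le (inv_pos.mpr (hPfpos 0))
      (le_ciSup (f := fun i => (Pf i)⁻¹) (Finite.bddAbove_range _) (0 : Fin (n + 1)))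
  have hinfP_pos : 0 < infP := by
    obtain ⟨j, hj⟩ := Finite.exists_min fun i => (Pf i)⁻¹
    rw [hinfPdef]
    have hj2 : (⨅ i, (Pf i)⁻¹) = (Pf j)⁻¹ :=
      le_antisymm (ciInf_le (f := fun i => (Pf i)⁻¹) (Finite.bddBelow_range _) j) (le_ciInf hj)
    rw [hj2]; exact inv_pos.mpr (hPfpos j)
  have hsupP_mul : ∀ i, 1 ≤ supP * Pf i := by
    intro i
    have h1 : (Pf i)⁻¹ ≤ supP := by
      rw [hsupPdef]; exact le_ciSup (f := fun j => (Pf j)⁻¹) (Finite.bddAbove_range _) i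
    have := mul_le_mul_of_nonneg_right h1 (hPfpos i).le
    rwa [inv_mul_cancel₀ (hPfpos i).ne'] at this
  have hinfP_mul : ∀ i, infP * Pf i ≤ 1 := by
    intro i
    have h1 : infP ≤ (Pf i)⁻¹ := by
      rw [hinfPdef]; exact ciInf_le (f := fun j => (Pf j)⁻¹) (Finite.bddBelow_range _) i
    have := mul_le_mul_of_nonneg_right h1 (hPfpos i).le
    rwa [inv_mul_cancel₀ (hPfpos i).ne'] at this
  -- the matrix A and its bounds
  set A : Matrix (Fin (n + 1)) (Fin (n + 1)) ℝ :=
    Matrix.diagonal sd * (B⁻¹)ᵀ * Matrix.diagonal sw with hA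
  have hAdet : IsUnit A.det := by
    rw [hA, Matrix.det_mul, Matrix.det_mul, Matrix.det_diagonal, Matrix.det_diagonal]
    refine ((isUnit_iff_ne_zero.mpr ?_).mul hBitdet).mul (isUnit_iff_ne_zero.mpr ?_)
    · exact Finset.prod_ne_zero_iff.mpr fun i _ => (hsdpos i).ne'
    · exact Finset.prod_ne_zero_iff.mpr fun i _ => (hswpos i).ne'
  have hAform : ∀ v : Fin (n + 1) → ℝ,
      (A *ᵥ v) ⬝ᵥ (A *ᵥ v) = (fun i => sw i * v i) ⬝ᵥ (St *ᵥ (fun i => sw i * v i)) := by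
    intro v
    set u : Fin (n + 1) → ℝ := fun i => sw i * v i with hu
    have hdiagv : Matrix.diagonal sw *ᵥ v = u := by
      funext i; simp [Matrix.mulVec_diagonal, hu]
    rw [hStform u, hA, ← Matrix.mulVec_mulVec, ← Matrix.mulVec_mulVec, hdiagv]
    simp only [dotProduct, Matrix.mulVec_diagonal]
    exact Finset.sum_congr rfl fun i _ => by rw [← hsdsq i]; ring
  have husq : ∀ v : Fin (n + 1) → ℝ,
      (fun i => sw i * v i) ⬝ᵥ (fun i => sw i * v i) = ∑ i, w i * v i ^ 2 := by
    intro v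
    simp only [dotProduct]
    exact Finset.sum_congr rfl fun i _ => by rw [← hswsq i]; ring
  have hAup : ∀ v : Fin (n + 1) → ℝ,
      (A *ᵥ v) ⬝ᵥ (A *ᵥ v) ≤ (ν 0 * ⨆ i, w i) * (v ⬝ᵥ v) := by
    intro v
    rw [hAform v]
    refine le_trans (hStquad _).2 ?_
    rw [husq v, mul_assoc]
    refine mul_le_mul_of_nonneg_left ?_ hν0_pos.le
    have hvv : (⨆ i, w i) * (v ⬝ᵥ v) = ∑ i, (⨆ j, w j) * v i ^ 2 := by
      simp only [dotProduct, Finset.mul_sum]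
      exact Finset.sum_congr rfl fun i _ => by ring
    rw [hvv]
    exact Finset.sum_le_sum fun i _ => mul_le_mul_of_nonneg_right (hsupw i) (sq_nonneg _)
  have hAlo : ∀ v : Fin (n + 1) → ℝ,
      (ν (Fin.last n) * ⨅ i, w i) * (v ⬝ᵥ v) ≤ (A *ᵥ v) ⬝ᵥ (A *ᵥ v) := by
    intro v
    rw [hAform v]
    refine le_trans ?_ (hStquad _).1
    rw [husq v, mul_assoc]
    refine mul_le_mul_of_nonneg_left ?_ hνlast_pos.le
    have hvv : (⨅ i, w i) * (v ⬝ᵥ v) = ∑ i, (⨅ j, w j) * v i ^ 2 := by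
      simp only [dotProduct, Finset.mul_sum]
      exact Finset.sum_congr rfl fun i _ => by ring
    rw [hvv]
    exact Finset.sum_le_sum fun i _ => mul_le_mul_of_nonneg_right (hinfw_le i) (sq_nonneg _)
  have hATup : ∀ s, (Aᵀ *ᵥ s) ⬝ᵥ (Aᵀ *ᵥ s) ≤ (ν 0 * ⨆ i, w i) * (s ⬝ᵥ s) :=
    opbound A _ (mul_nonneg hν0_pos.le hsupw_pos.le) hAup
  have hATlo : ∀ s, (ν (Fin.last n) * ⨅ i, w i) * (s ⬝ᵥ s) ≤ (Aᵀ *ᵥ s) ⬝ᵥ (Aᵀ *ᵥ s) :=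
    oplower A hAdet _ (mul_pos hνlast_pos hinfw_pos) hAlo
  -- key eigen-analysis
  have hkey : ∀ t : ℝ, M.charpoly.eval t = 0 → ∃ s : Fin (n + 1) → ℝ,
      0 < s ⬝ᵥ s ∧ t * (∑ i, Pf i * s i ^ 2) = (Aᵀ *ᵥ s) ⬝ᵥ (Aᵀ *ᵥ s) + s ⬝ᵥ s := by
    intro t ht
    obtain ⟨x, hx0, hxe⟩ := exists_eigvec M t ht
    set z : Fin (n + 1) → ℝ := (Phalf⁻¹)ᵀ *ᵥ x with hz
    set y : Fin (n + 1) → ℝ := B *ᵥ z with hy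
    set s : Fin (n + 1) → ℝ := fun i => (sd i)⁻¹ * y i with hs
    have hy_of_s : ∀ i, y i = sd i * s i := by
      intro i
      simp only [hs]
      rw [← mul_assoc, mul_inv_cancel₀ (hsdpos i).ne', one_mul]
    have hxz : x = fun i => e i * y i := by
      have h1 : Phalfᵀ *ᵥ z = x := by
        rw [hz, Matrix.mulVec_mulVec, ← Matrix.transpose_mul,
          Matrix.nonsing_inv_mul _ hPdet, Matrix.transpose_one, Matrix.one_mulVec]
      have h2 : Phalfᵀ = Matrix.diagonal e * B := by
        rw [hP, Matrix.transpose_mul, Matrix.diagonal_transpose, Matrix.transpose_transpose]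
      rw [← h1, h2, ← Matrix.mulVec_mulVec, ← hy]
      funext i; simp [Matrix.mulVec_diagonal]
    have hxx : x ⬝ᵥ x = ∑ i, Pf i * s i ^ 2 := by
      rw [hxz]
      simp only [dotProduct]
      refine Finset.sum_congr rfl fun i _ => ?_
      have h3 : e i * y i * (e i * y i) = (w i + (d i)⁻¹) * y i ^ 2 := by
        rw [← hesq i]; ring
      have h4 : y i ^ 2 = d i * s i ^ 2 := by rw [hy_of_s i, ← hsdsq i]; ring
      rw [h3, h4, hPfdef]
      have hdne := (hd i).ne'
      field_simp
    have hMx : x ⬝ᵥ (M *ᵥ x) = z ⬝ᵥ ((W + Sinv) *ᵥ z) := by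
      rw [hM, ← Matrix.mulVec_mulVec, ← Matrix.mulVec_mulVec,
        dotProduct_mulVec, ← Matrix.mulVec_transpose, ← hz]
    have hWz : z ⬝ᵥ ((W + Sinv) *ᵥ z) =
        (∑ i, w i * z i ^ 2) + ∑ i, (d i)⁻¹ * y i ^ 2 := by
      rw [Matrix.add_mulVec, dotProduct_add]
      congr 1
      · rw [hW]
        simp only [dotProduct, Matrix.mulVec_diagonal]
        exact Finset.sum_congr rfl fun i _ => by ring
      · have hDinv : D⁻¹ = Matrix.diagonal fun i => (d i)⁻¹ := by
          refine Matrix.inv_eq_right_inv ?_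
          rw [hD, Matrix.diagonal_mul_diagonal]
          have h9 : (fun i => d i * (d i)⁻¹) = fun _ : Fin (n + 1) => (1 : ℝ) :=
            funext fun i => mul_inv_cancel₀ (hd i).ne'
          rw [h9, Matrix.diagonal_one]
        rw [hSinv, ← Matrix.mulVec_mulVec, ← Matrix.mulVec_mulVec,
          dotProduct_mulVec, Matrix.vecMul_transpose, ← hy, hDinv]
        simp only [dotProduct, Matrix.mulVec_diagonal]
        exact Finset.sum_congr rfl fun i _ => by ring
    have hsz : ∑ i, w i * z i ^ 2 = (Aᵀ *ᵥ s) ⬝ᵥ (Aᵀ *ᵥ s) := by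
      have hAT : Aᵀ = Matrix.diagonal sw * B⁻¹ * Matrix.diagonal sd := by
        rw [hA]
        simp [Matrix.transpose_mul, Matrix.diagonal_transpose, Matrix.transpose_transpose,
          Matrix.mul_assoc]
      have hds : Matrix.diagonal sd *ᵥ s = y := by
        funext i; simp [Matrix.mulVec_diagonal, ← hy_of_s i]
      have hBz : B⁻¹ *ᵥ y = z := by
        rw [hy, Matrix.mulVec_mulVec, Matrix.nonsing_inv_mul _ hBinv, Matrix.one_mulVec]
      rw [hAT, ← Matrix.mulVec_mulVec, ← Matrix.mulVec_mulVec, hds, hBz]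
      simp only [dotProduct, Matrix.mulVec_diagonal]
      exact Finset.sum_congr rfl fun i _ => by rw [← hswsq i]; ring
    have hss : ∑ i, (d i)⁻¹ * y i ^ 2 = s ⬝ᵥ s := by
      simp only [dotProduct]
      refine Finset.sum_congr rfl fun i _ => ?_
      rw [hy_of_s i, hs]
      have h5 := (hsdpos i).ne'
      have h6 : d i = sd i ^ 2 := (hsdsq i).symm
      rw [h6]
      field_simp
    have hy0 : y ≠ 0 := by
      intro h0
      apply hx0
      rw [hxz]
      funext i
      simp only [Pi.zero_apply]
      rw [show y i = 0 from congrFun h0 i, mul_zero]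
    have hspos : 0 < s ⬝ᵥ s := by
      rw [← hss]
      exact sum_mul_sq_pos (fun i => inv_pos.mpr (hd i)) hy0
    refine ⟨s, hspos, ?_⟩
    have hteig : x ⬝ᵥ (M *ᵥ x) = t * (x ⬝ᵥ x) := by
      rw [hxe, dotProduct_smul, smul_eq_mul]
    rw [← hxx, ← hteig, hMx, hWz, hsz, hss]
  -- apply key to μ 0 and μ last
  have hμroot : ∀ j : Fin (n + 1), M.charpoly.eval (μ j) = 0 := by
    intro j
    rw [hμ]
    simp only [Polynomial.eval_prod, Polynomial.eval_sub, Polynomial.eval_X,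
      Polynomial.eval_C]
    exact Finset.prod_eq_zero (Finset.mem_univ j) (by ring)
  obtain ⟨s0, hs0pos, hs0eq⟩ := hkey (μ 0) (hμroot 0)
  obtain ⟨s1, hs1pos, hs1eq⟩ := hkey (μ (Fin.last n)) (hμroot (Fin.last n))
  have hs0ne : s0 ≠ 0 := fun h => by simp [h] at hs0pos
  have hs1ne : s1 ≠ 0 := fun h => by simp [h] at hs1pos
  have hdots : ∀ s : Fin (n + 1) → ℝ, s ⬝ᵥ s = ∑ i, s i ^ 2 := by
    intro s; simp only [dotProduct]
    exact Finset.sum_congr rfl fun i _ => by ring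
  have hT0pos : 0 < ∑ i, Pf i * s0 i ^ 2 := sum_mul_sq_pos hPfpos hs0ne
  have hT1pos : 0 < ∑ i, Pf i * s1 i ^ 2 := sum_mul_sq_pos hPfpos hs1ne
  -- S ≤ supP * T  and  infP * T ≤ S
  have hSsup : ∀ s : Fin (n + 1) → ℝ, s ⬝ᵥ s ≤ supP * ∑ i, Pf i * s i ^ 2 := by
    intro s
    rw [hdots s, Finset.mul_sum]
    refine Finset.sum_le_sum fun i _ => ?_
    have := mul_le_mul_of_nonneg_right (hsupP_mul i) (sq_nonneg (s i))
    rw [one_mul] at this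
    calc s i ^ 2 ≤ supP * Pf i * s i ^ 2 := this
      _ = supP * (Pf i * s i ^ 2) := by ring
  have hSinf : ∀ s : Fin (n + 1) → ℝ, infP * (∑ i, Pf i * s i ^ 2) ≤ s ⬝ᵥ s := by
    intro s
    rw [hdots s, Finset.mul_sum]
    refine Finset.sum_le_sum fun i _ => ?_
    have := mul_le_mul_of_nonneg_right (hinfP_mul i) (sq_nonneg (s i))
    rw [one_mul] at this
    calc infP * (Pf i * s i ^ 2) = infP * Pf i * s i ^ 2 := by ring
      _ ≤ s i ^ 2 := this
  -- positivity of eigenvalues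
  have hμ0pos : 0 < μ 0 := by
    have hN : 0 < (Aᵀ *ᵥ s0) ⬝ᵥ (Aᵀ *ᵥ s0) + s0 ⬝ᵥ s0 :=
      add_pos_of_nonneg_of_pos (dot_self_nonneg _) hs0pos
    nlinarith [hs0eq, hT0pos]
  have hμlpos : 0 < μ (Fin.last n) := by
    have hN : 0 < (Aᵀ *ᵥ s1) ⬝ᵥ (Aᵀ *ᵥ s1) + s1 ⬝ᵥ s1 :=
      add_pos_of_nonneg_of_pos (dot_self_nonneg _) hs1pos
    nlinarith [hs1eq, hT1pos]
  -- upper bound for μ 0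
  have hμ0ub : μ 0 ≤ (ν 0 * (⨆ i, w i) + 1) * supP := by
    have hc1 : (0:ℝ) ≤ ν 0 * (⨆ i, w i) + 1 := by positivity
    have h1 : μ 0 * (∑ i, Pf i * s0 i ^ 2) ≤
        ((ν 0 * (⨆ i, w i) + 1) * supP) * (∑ i, Pf i * s0 i ^ 2) := by
      rw [hs0eq]
      calc (Aᵀ *ᵥ s0) ⬝ᵥ (Aᵀ *ᵥ s0) + s0 ⬝ᵥ s0
          ≤ (ν 0 * ⨆ i, w i) * (s0 ⬝ᵥ s0) + s0 ⬝ᵥ s0 := by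
            have := hATup s0; linarith
        _ = (ν 0 * (⨆ i, w i) + 1) * (s0 ⬝ᵥ s0) := by ring
        _ ≤ (ν 0 * (⨆ i, w i) + 1) * (supP * ∑ i, Pf i * s0 i ^ 2) :=
            mul_le_mul_of_nonneg_left (hSsup s0) hc1
        _ = ((ν 0 * (⨆ i, w i) + 1) * supP) * (∑ i, Pf i * s0 i ^ 2) := by ring
    exact le_of_mul_le_mul_right h1 hT0pos
  -- lower bound for μ last
  have hμllb : (ν (Fin.last n) * (⨅ i, w i) + 1) * infP ≤ μ (Fin.last n) := by
    have ha1 : (0:ℝ) ≤ ν (Fin.last n) * (⨅ i, w i) + 1 := by positivity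
    have h1 : ((ν (Fin.last n) * (⨅ i, w i) + 1) * infP) * (∑ i, Pf i * s1 i ^ 2) ≤
        μ (Fin.last n) * (∑ i, Pf i * s1 i ^ 2) := by
      rw [hs1eq]
      calc ((ν (Fin.last n) * (⨅ i, w i) + 1) * infP) * (∑ i, Pf i * s1 i ^ 2)
          = (ν (Fin.last n) * (⨅ i, w i) + 1) * (infP * ∑ i, Pf i * s1 i ^ 2) := by ring
        _ ≤ (ν (Fin.last n) * (⨅ i, w i) + 1) * (s1 ⬝ᵥ s1) :=
            mul_le_mul_of_nonneg_left (hSinf s1) ha1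
        _ = (ν (Fin.last n) * ⨅ i, w i) * (s1 ⬝ᵥ s1) + s1 ⬝ᵥ s1 := by ring
        _ ≤ (Aᵀ *ᵥ s1) ⬝ᵥ (Aᵀ *ᵥ s1) + s1 ⬝ᵥ s1 := by
            have := hATlo s1; linarith
    exact le_of_mul_le_mul_right h1 hT1pos
  have hLpos : 0 < (ν (Fin.last n) * (⨅ i, w i) + 1) * infP := by positivity
  have hUnn : 0 ≤ (ν 0 * (⨆ i, w i) + 1) * supP := by positivity
  exact div_le_div₀ hUnn hμ0ub hLpos hμllb
end

section
/- Let $B \in \mathbb{R}^{n\times n}$ be an invertible lower-triangular matrix with unit diagonal, and let $D, W \in \mathbb{R}^{n\times n}$ be diagonal matrices with strictly positive diagonal entries. Define $\tilde\Sigma = B^{-1} D B^{-T}$, $\tilde\Sigma^{-1} = B^T D^{-1} B$, and the LVA-preconditioned matrix $M = P^{-1/2}(W + \tilde\Sigma^{-1})P^{-T/2}$ with $P^{1/2} = B^T D^{-1/2}$. Then the condition number of $M$ is bounded as $\frac{\lambda_1(M)}{\lambda_n(M)} \le \frac{\lambda_1(\tilde\Sigma)\max_i(W_{ii}) + 1}{\lambda_n(\tilde\Sigma)\min_i(W_{ii})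 + 1}$. -/
open Matrix Polynomial

section Helpers

variable {m : Type*} [Fintype m] [DecidableEq m]

lemma charpoly_conj_eq {R : Type*} [CommRing R] (P A Q : Matrix m m R) (h : P * Q = 1) :
    (P * A * Q).charpoly = A.charpoly := by
  have key : charmatrix (P * A * Q) = P.map C * charmatrix A * Q.map C := by
    unfold charmatrix
    rw [RingHom.mapMatrix_apply, RingHom.mapMatrix_apply, Matrix.mul_sub, Matrix.sub_mul,
      ← Matrix.map_mul, ← Matrix.map_mul]
    congr 1
    rw [← (Matrix.scalar_commute (X : R[X]) (fun r' => Commute.all _ _) (P.map C)).eq,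
      Matrix.mul_assoc, ← Matrix.map_mul, h, Matrix.map_one _ (map_zero C) (map_one C),
      Matrix.mul_one]
  have hdet : (P.map (C : R →+* R[X])).det * (Q.map (C : R →+* R[X])).det = 1 := by
    rw [← det_mul, ← Matrix.map_mul, h, Matrix.map_one _ (map_zero C) (map_one C), det_one]
  rw [Matrix.charpoly, Matrix.charpoly, key, det_mul, det_mul]
  calc (P.map C).det * (charmatrix A).det * (Q.map C).det
      = (P.map C).det * (Q.map C).det * (charmatrix A).det := by ring
    _ = (charmatrix A).det := by rw [hdet, one_mul]

lemma charpoly_mul_comm_of_isUnit {R : Type*} [CommRing R] (F G : Matrix m m R)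
    (hF : IsUnit F.det) : (F * G).charpoly = (G * F).charpoly := by
  have h1 : F * (G * F) * F⁻¹ = F * G := by
    simp only [← Matrix.mul_assoc]
    rw [Matrix.mul_assoc (F * G) F F⁻¹, Matrix.mul_nonsing_inv _ hF, Matrix.mul_one]
  rw [← h1, charpoly_conj_eq _ _ _ (Matrix.mul_nonsing_inv _ hF)]

lemma charpoly_diagonal_real (v : m → ℝ) :
    (Matrix.diagonal v).charpoly = ∏ i, (X - C (v i)) := by
  have : charmatrix (Matrix.diagonal v) = Matrix.diagonal fun i => (X : ℝ[X]) - C (v i) := by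
    ext i j
    by_cases h : i = j
    · subst h; simp
    · simp [charmatrix_apply_ne _ _ _ h, Matrix.diagonal_apply_ne _ h]
  rw [Matrix.charpoly, this, det_diagonal]

lemma isHermitian_charpoly_eq {A : Matrix m m ℝ} (hA : A.IsHermitian) :
    A.charpoly = ∏ i, (X - C (hA.eigenvalues i)) := by
  have hU : (hA.eigenvectorUnitary : Matrix m m ℝ) * star (hA.eigenvectorUnitary : Matrix m m ℝ)
      = 1 := Matrix.mem_unitaryGroup_iff.mp (hA.eigenvectorUnitary).2
  conv_lhs => rw [hA.spectral_theorem]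
  rw [Unitary.conjStarAlgAut_apply, charpoly_conj_eq _ _ _ hU]
  have : (RCLike.ofReal ∘ hA.eigenvalues : m → ℝ) = hA.eigenvalues := by
    funext i; simp
  rw [this, charpoly_diagonal_real]

lemma unitary_conj_diag_sub {A : Matrix m m ℝ} (hA : A.IsHermitian) (c : ℝ) :
    (hA.eigenvectorUnitary : Matrix m m ℝ) *
      Matrix.diagonal (fun i => c - hA.eigenvalues i) *
      star (hA.eigenvectorUnitary : Matrix m m ℝ) = c • (1 : Matrix m m ℝ) - A := by
  have hU : (hA.eigenvectorUnitary : Matrix m m ℝ) * star (hA.eigenvectorUnitary : Matrix m m ℝ)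
      = 1 := Matrix.mem_unitaryGroup_iff.mp (hA.eigenvectorUnitary).2
  have hdiag : Matrix.diagonal (fun i => c - hA.eigenvalues i)
      = c • (1 : Matrix m m ℝ) - Matrix.diagonal hA.eigenvalues := by
    ext i j
    by_cases h : i = j
    · subst h; simp [Matrix.one_apply]
    · simp [Matrix.diagonal_apply_ne _ h, Matrix.one_apply_ne h]
  have hco : (RCLike.ofReal ∘ hA.eigenvalues : m → ℝ) = hA.eigenvalues := funext fun i => by simp
  have hspec : A = (hA.eigenvectorUnitary : Matrix m m ℝ) * Matrix.diagonal hA.eigenvalues *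
      star (hA.eigenvectorUnitary : Matrix m m ℝ) := by
    rw [← hco]; exact hA.spectral_theorem
  rw [hdiag, Matrix.mul_sub, Matrix.sub_mul, ← hspec]
  congr 1
  rw [Matrix.mul_smul, Matrix.mul_one, Matrix.smul_mul, hU]

lemma quadratic_form_le {A : Matrix m m ℝ} (hA : A.IsHermitian) {c : ℝ}
    (h : ∀ i, hA.eigenvalues i ≤ c) (x : m → ℝ) :
    x ⬝ᵥ (A *ᵥ x) ≤ c * (x ⬝ᵥ x) := by
  have hpsd : (c • (1 : Matrix m m ℝ) - A).PosSemidef := by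
    rw [← unitary_conj_diag_sub hA c]
    have hd : (Matrix.diagonal fun i => c - hA.eigenvalues i).PosSemidef :=
      Matrix.posSemidef_diagonal_iff.mpr fun i => sub_nonneg.mpr (h i)
    simpa [Matrix.star_eq_conjTranspose] using
      hd.mul_mul_conjTranspose_same (hA.eigenvectorUnitary : Matrix m m ℝ)
  have h0 := hpsd.dotProduct_mulVec_nonneg x
  have hs : star x = x := by funext i; simp
  rw [hs, Matrix.sub_mulVec, dotProduct_sub, Matrix.smul_mulVec, Matrix.one_mulVec,
    dotProduct_smul] at h0
  simp only [smul_eq_mul] at h0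
  linarith

lemma le_quadratic_form {A : Matrix m m ℝ} (hA : A.IsHermitian) {c : ℝ}
    (h : ∀ i, c ≤ hA.eigenvalues i) (x : m → ℝ) :
    c * (x ⬝ᵥ x) ≤ x ⬝ᵥ (A *ᵥ x) := by
  have key : (hA.eigenvectorUnitary : Matrix m m ℝ) *
      Matrix.diagonal (fun i => hA.eigenvalues i - c) *
      star (hA.eigenvectorUnitary : Matrix m m ℝ) = A - c • (1 : Matrix m m ℝ) := by
    have hneg : Matrix.diagonal (fun i => hA.eigenvalues i - c)
        = -(Matrix.diagonal fun i => c - hA.eigenvalues i) := by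
      ext i j
      by_cases h : i = j
      · subst h; simp
      · simp [Matrix.diagonal_apply_ne _ h]
    rw [hneg, Matrix.mul_neg, Matrix.neg_mul, unitary_conj_diag_sub hA c, neg_sub]
  have hpsd : (A - c • (1 : Matrix m m ℝ)).PosSemidef := by
    rw [← key]
    have hd : (Matrix.diagonal fun i => hA.eigenvalues i - c).PosSemidef :=
      Matrix.posSemidef_diagonal_iff.mpr fun i => sub_nonneg.mpr (h i)
    simpa [Matrix.star_eq_conjTranspose] using
      hd.mul_mul_conjTranspose_same (hA.eigenvectorUnitary : Matrix m m ℝ)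
  have h0 := hpsd.dotProduct_mulVec_nonneg x
  have hs : star x = x := by funext i; simp
  rw [hs, Matrix.sub_mulVec, dotProduct_sub, Matrix.smul_mulVec, Matrix.one_mulVec,
    dotProduct_smul] at h0
  simp only [smul_eq_mul] at h0
  linarith

end Helpers

section Helpers2
variable {m : Type*} [Fintype m] [DecidableEq m]

lemma eig_eq_quadratic {A : Matrix m m ℝ} (hA : A.IsHermitian) (j : m) :
    hA.eigenvalues j = (⇑(hA.eigenvectorBasis j) : m → ℝ) ⬝ᵥ (A *ᵥ ⇑(hA.eigenvectorBasis j)) := by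
  have h := hA.eigenvalues_eq j
  simpa using h

lemma eigenvectorBasis_self_dotProduct {A : Matrix m m ℝ} (hA : A.IsHermitian) (j : m) :
    (⇑(hA.eigenvectorBasis j) : m → ℝ) ⬝ᵥ (⇑(hA.eigenvectorBasis j) : m → ℝ) = 1 := by
  have hn := hA.eigenvectorBasis.orthonormal.1 j
  have h2 : (inner ℝ (hA.eigenvectorBasis j) (hA.eigenvectorBasis j) : ℝ) = 1 := by
    rw [real_inner_self_eq_norm_sq, hn, one_pow]
  rw [EuclideanSpace.inner_eq_star_dotProduct] at h2
  simpa using h2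

lemma exists_eq_of_prod_X_sub_C_eq {k : ℕ} {a b : Fin k → ℝ}
    (h : (∏ i, (X - C (a i)) : ℝ[X]) = ∏ i, (X - C (b i))) (i : Fin k) :
    ∃ j, a i = b j := by
  have key : Multiset.map a Finset.univ.val = Multiset.map b Finset.univ.val := by
    have ha := Polynomial.roots_multiset_prod_X_sub_C (Multiset.map a Finset.univ.val)
    have hb := Polynomial.roots_multiset_prod_X_sub_C (Multiset.map b Finset.univ.val)
    rw [Multiset.map_map] at ha hb
    calc Multiset.map a Finset.univ.val
        = ((Multiset.map (fun i => X - C (a i)) Finset.univ.val).prod).roots := ha.symm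
      _ = ((Multiset.map (fun i => X - C (b i)) Finset.univ.val).prod).roots := by
          rw [← Finset.prod_eq_multiset_prod, ← Finset.prod_eq_multiset_prod, h]
      _ = Multiset.map b Finset.univ.val := hb
  have hmem : a i ∈ Multiset.map b Finset.univ.val := by
    rw [← key]
    exact Multiset.mem_map_of_mem a (Finset.mem_univ i)
  obtain ⟨j, _, hj⟩ := Multiset.mem_map.mp hmem
  exact ⟨j, hj.symm⟩

end Helpers2

/-- Condition number bound for the LVA-preconditioned matrix
`M = P^{-1/2}(W + Σ̃⁻¹)P^{-T/2}` with `P½ = Bᵀ D^{-1/2}`: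
`λ₁(M)/λₙ(M) ≤ (λ₁(Σ̃) maxᵢ Wᵢᵢ + 1) / (λₙ(Σ̃) minᵢ Wᵢᵢ + 1)`.
`μ` and `ν` are the decreasingly ordered eigenvalue sequences of `M` and `Σ̃`,
so `λ₁ = μ 0` and `λₙ = μ (Fin.last n)`. -/
theorem lva_condition_number_bound {n : ℕ}
    (B D W Sinv St Phalf M : Matrix (Fin (n + 1)) (Fin (n + 1)) ℝ)
    (d w : Fin (n + 1) → ℝ) (hd : ∀ i, 0 < d i) (hw : ∀ i, 0 < w i)
    (hBlow : ∀ i j : Fin (n + 1), i < j → B i j = 0) (hBdiag : ∀ i, B i i = 1)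
    (hBinv : IsUnit B.det)
    (hD : D = Matrix.diagonal d) (hW : W = Matrix.diagonal w)
    (hSt : St = B⁻¹ * D * (B⁻¹)ᵀ)
    (hSinv : Sinv = Bᵀ * D⁻¹ * B)
    (hP : Phalf = Bᵀ * Matrix.diagonal (fun i => Real.sqrt ((d i)⁻¹)))
    (hM : M = Phalf⁻¹ * (W + Sinv) * (Phalf⁻¹)ᵀ)
    (μ ν : Fin (n + 1) → ℝ) (hμa : Antitone μ) (hνa : Antitone ν)
    (hμ : M.charpoly = ∏ i : Fin (n + 1), (X - C (μ i)))
    (hν : St.charpoly = ∏ i : Fin (n + 1), (X - C (ν i))) :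
    μ 0 / μ (Fin.last n) ≤
      (ν 0 * (⨆ i, w i) + 1) / (ν (Fin.last n) * (⨅ i, w i) + 1) := by
  have hsq : ∀ i, Real.sqrt (d i) * Real.sqrt (d i) = d i :=
    fun i => Real.mul_self_sqrt (hd i).le
  have hBt : IsUnit Bᵀ.det := by rwa [Matrix.det_transpose]
  set G : Matrix (Fin (n+1)) (Fin (n+1)) ℝ := Matrix.diagonal (fun i => Real.sqrt (d i)) with hG
  set F : Matrix (Fin (n+1)) (Fin (n+1)) ℝ := G * (Bᵀ)⁻¹ with hF
  -- basic inverses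
  have hDinv : D⁻¹ = Matrix.diagonal (fun i => (d i)⁻¹) := by
    apply Matrix.inv_eq_right_inv
    rw [hD, Matrix.diagonal_mul_diagonal]
    have : (fun i => d i * (d i)⁻¹) = fun _ : Fin (n+1) => (1:ℝ) :=
      funext fun i => mul_inv_cancel₀ (hd i).ne'
    rw [this, Matrix.diagonal_one]
  have hPinv : Phalf⁻¹ = F := by
    apply Matrix.inv_eq_right_inv
    rw [hP, hF, hG]
    have h1 : Matrix.diagonal (fun i => Real.sqrt ((d i)⁻¹)) *
        Matrix.diagonal (fun i => Real.sqrt (d i)) = 1 := by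
      rw [Matrix.diagonal_mul_diagonal]
      have : (fun i => Real.sqrt ((d i)⁻¹) * Real.sqrt (d i)) = fun _ : Fin (n+1) => (1:ℝ) := by
        funext i
        rw [Real.sqrt_inv, inv_mul_cancel₀ (ne_of_gt (Real.sqrt_pos.mpr (hd i)))]
      rw [this, Matrix.diagonal_one]
    calc Bᵀ * Matrix.diagonal (fun i => Real.sqrt ((d i)⁻¹)) *
          (Matrix.diagonal (fun i => Real.sqrt (d i)) * (Bᵀ)⁻¹)
        = Bᵀ * (Matrix.diagonal (fun i => Real.sqrt ((d i)⁻¹)) *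
            Matrix.diagonal (fun i => Real.sqrt (d i))) * (Bᵀ)⁻¹ := by
          simp only [Matrix.mul_assoc]
      _ = Bᵀ * (Bᵀ)⁻¹ := by rw [h1, Matrix.mul_one]
      _ = 1 := Matrix.mul_nonsing_inv _ hBt
  have hFt : Fᵀ = B⁻¹ * G := by
    rw [hF, Matrix.transpose_mul, Matrix.transpose_nonsing_inv, Matrix.transpose_transpose,
      hG, Matrix.diagonal_transpose]
  have hGG : G * G = D := by
    rw [hG, Matrix.diagonal_mul_diagonal, hD]
    exact congrArg Matrix.diagonal (funext fun i => hsq i)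
  have hFtF : Fᵀ * F = St := by
    rw [hFt, hF, hSt]
    calc B⁻¹ * G * (G * (Bᵀ)⁻¹) = B⁻¹ * (G * G) * (Bᵀ)⁻¹ := by simp only [Matrix.mul_assoc]
      _ = B⁻¹ * D * (B⁻¹)ᵀ := by rw [hGG, Matrix.transpose_nonsing_inv]
  have hFdet : IsUnit F.det := by
    rw [hF, Matrix.det_mul]
    refine IsUnit.mul ?_ (Matrix.isUnit_nonsing_inv_det _ hBt)
    rw [hG, Matrix.det_diagonal]
    exact isUnit_iff_ne_zero.mpr (Finset.prod_ne_zero_iff.mpr fun i _ =>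
      ne_of_gt (Real.sqrt_pos.mpr (hd i)))
  -- M = 1 + F W Fᵀ
  have hFSF : F * Sinv * Fᵀ = 1 := by
    rw [hSinv, hF, hFt]
    calc G * (Bᵀ)⁻¹ * (Bᵀ * D⁻¹ * B) * (B⁻¹ * G)
        = G * ((Bᵀ)⁻¹ * Bᵀ) * D⁻¹ * (B * B⁻¹) * G := by simp only [Matrix.mul_assoc]
      _ = G * D⁻¹ * G := by
          rw [Matrix.nonsing_inv_mul _ hBt, Matrix.mul_nonsing_inv _ hBinv,
            Matrix.mul_one, Matrix.mul_one]
      _ = 1 := by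
          rw [hDinv, hG, Matrix.diagonal_mul_diagonal, Matrix.diagonal_mul_diagonal]
          have : (fun i => Real.sqrt (d i) * (d i)⁻¹ * Real.sqrt (d i))
              = fun _ : Fin (n+1) => (1:ℝ) := by
            funext i
            have h2 : Real.sqrt (d i) * (d i)⁻¹ * Real.sqrt (d i)
                = (Real.sqrt (d i) * Real.sqrt (d i)) * (d i)⁻¹ := by ring
            rw [h2, hsq i, mul_inv_cancel₀ (hd i).ne']
          rw [this, Matrix.diagonal_one]
  have hM1 : M = 1 + F * W * Fᵀ := by
    rw [hM, hPinv, Matrix.mul_add, Matrix.add_mul, hFSF]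
    exact add_comm _ _
  -- F * Fᵀ spectral facts
  have hCpsd : (F * Fᵀ).PosSemidef := by
    have := Matrix.posSemidef_self_mul_conjTranspose F
    rwa [Matrix.conjTranspose_eq_transpose_of_trivial] at this
  have hCh : (F * Fᵀ).IsHermitian := hCpsd.1
  have hCcp : (F * Fᵀ).charpoly = ∏ i, (X - C (ν i)) := by
    rw [charpoly_mul_comm_of_isUnit F Fᵀ hFdet, hFtF, hν]
  have hprod : (∏ i, (X - C (hCh.eigenvalues i)) : ℝ[X]) = ∏ i, (X - C (ν i)) := by
    rw [← isHermitian_charpoly_eq hCh, hCcp]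
  have hCle : ∀ i, hCh.eigenvalues i ≤ ν 0 := by
    intro i
    obtain ⟨j, hj⟩ := exists_eq_of_prod_X_sub_C_eq hprod i
    rw [hj]
    exact hνa (Fin.zero_le j)
  have hCge : ∀ i, ν (Fin.last n) ≤ hCh.eigenvalues i := by
    intro i
    obtain ⟨j, hj⟩ := exists_eq_of_prod_X_sub_C_eq hprod i
    rw [hj]
    exact hνa (Fin.le_last j)
  have hνlast_nonneg : 0 ≤ ν (Fin.last n) := by
    obtain ⟨j, hj⟩ := exists_eq_of_prod_X_sub_C_eq hprod.symm (Fin.last n)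
    rw [hj]
    exact hCpsd.eigenvalues_nonneg j
  have hν0_nonneg : 0 ≤ ν 0 := le_trans hνlast_nonneg (hνa (Fin.zero_le _))
  -- sup/inf of w
  have hwsup : ∀ i, w i ≤ ⨆ i, w i := fun i =>
    le_ciSup (Set.Finite.bddAbove (Set.finite_range w)) i
  have hwinf : ∀ i, (⨅ i, w i) ≤ w i := fun i =>
    ciInf_le (Set.Finite.bddBelow (Set.finite_range w)) i
  have hsup_pos : 0 < ⨆ i, w i := lt_of_lt_of_le (hw 0) (hwsup 0)
  have hinf_pos : 0 < ⨅ i, w i := by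
    obtain ⟨i0, hi0⟩ := Finite.exists_min w
    exact lt_of_lt_of_le (hw i0) (le_ciInf hi0)
  -- M hermitian
  have hWpsd : W.PosSemidef := by
    rw [hW]
    exact Matrix.PosSemidef.diagonal fun i => (hw i).le
  have hMh : M.IsHermitian := by
    rw [hM1]
    refine Matrix.isHermitian_one.add ?_
    have := hWpsd.mul_mul_conjTranspose_same F
    rw [Matrix.conjTranspose_eq_transpose_of_trivial] at this
    exact this.1
  -- eigenvalue bounds for M
  have hMeig : ∀ j, hMh.eigenvalues j ≤ 1 + ν 0 * (⨆ i, w i) ∧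
      1 + ν (Fin.last n) * (⨅ i, w i) ≤ hMh.eigenvalues j := by
    intro j
    set v : Fin (n+1) → ℝ := ⇑(hMh.eigenvectorBasis j) with hv
    have hvv : v ⬝ᵥ v = 1 := eigenvectorBasis_self_dotProduct hMh j
    have heq : hMh.eigenvalues j = v ⬝ᵥ (M *ᵥ v) := eig_eq_quadratic hMh j
    set u : Fin (n+1) → ℝ := Fᵀ *ᵥ v with hu
    have hsplit : v ⬝ᵥ (M *ᵥ v) = 1 + u ⬝ᵥ (W *ᵥ u) := by
      rw [hM1, Matrix.add_mulVec, Matrix.one_mulVec, dotProduct_add, hvv]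
      congr 1
      rw [← Matrix.mulVec_mulVec, ← Matrix.mulVec_mulVec, Matrix.dotProduct_mulVec,
        ← Matrix.mulVec_transpose, ← hu]
    have huu : u ⬝ᵥ u = v ⬝ᵥ ((F * Fᵀ) *ᵥ v) := by
      rw [← Matrix.mulVec_mulVec, Matrix.dotProduct_mulVec, ← Matrix.mulVec_transpose, ← hu,
        Matrix.transpose_transpose, dotProduct_comm]
    have hCub : v ⬝ᵥ ((F * Fᵀ) *ᵥ v) ≤ ν 0 := by
      have := quadratic_form_le hCh hCle v
      rwa [hvv, mul_one] at this
    have hClb : ν (Fin.last n) ≤ v ⬝ᵥ ((F * Fᵀ) *ᵥ v) := by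
      have := le_quadratic_form hCh hCge v
      rwa [hvv, mul_one] at this
    have hWform : u ⬝ᵥ (W *ᵥ u) = ∑ i, w i * (u i * u i) := by
      rw [hW]
      simp [Matrix.mulVec_diagonal, dotProduct, mul_comm, mul_left_comm]
    have huu' : u ⬝ᵥ u = ∑ i, u i * u i := rfl
    constructor
    · rw [heq, hsplit]
      have h1 : u ⬝ᵥ (W *ᵥ u) ≤ (⨆ i, w i) * (u ⬝ᵥ u) := by
        rw [hWform, huu', Finset.mul_sum]
        refine Finset.sum_le_sum fun i _ => ?_
        exact mul_le_mul_of_nonneg_right (hwsup i) (mul_self_nonneg _)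
      have h2 : (⨆ i, w i) * (u ⬝ᵥ u) ≤ (⨆ i, w i) * ν 0 := by
        refine mul_le_mul_of_nonneg_left ?_ hsup_pos.le
        rw [huu]; exact hCub
      have := le_trans h1 h2
      nlinarith [this]
    · rw [heq, hsplit]
      have h1 : (⨅ i, w i) * (u ⬝ᵥ u) ≤ u ⬝ᵥ (W *ᵥ u) := by
        rw [hWform, huu', Finset.mul_sum]
        refine Finset.sum_le_sum fun i _ => ?_
        exact mul_le_mul_of_nonneg_right (hwinf i) (mul_self_nonneg _)
      have h2 : (⨅ i, w i) * ν (Fin.last n) ≤ (⨅ i, w i) * (u ⬝ᵥ u) := by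
        refine mul_le_mul_of_nonneg_left ?_ hinf_pos.le
        rw [huu]; exact hClb
      have := le_trans h2 h1
      nlinarith [this]
  -- transfer to μ
  have hμprod : (∏ i, (X - C (μ i)) : ℝ[X]) = ∏ i, (X - C (hMh.eigenvalues i)) := by
    rw [← hμ, isHermitian_charpoly_eq hMh]
  have hμ0 : μ 0 ≤ 1 + ν 0 * (⨆ i, w i) := by
    obtain ⟨j, hj⟩ := exists_eq_of_prod_X_sub_C_eq hμprod 0
    rw [hj]
    exact (hMeig j).1
  have hμlast : 1 + ν (Fin.last n) * (⨅ i, w i) ≤ μ (Fin.last n) := by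
    obtain ⟨j, hj⟩ := exists_eq_of_prod_X_sub_C_eq hμprod (Fin.last n)
    rw [hj]
    exact (hMeig j).2
  have hden_pos : 0 < ν (Fin.last n) * (⨅ i, w i) + 1 := by positivity
  have hμlast_pos : 0 < μ (Fin.last n) :=
    lt_of_lt_of_le (by linarith) hμlast
  have hnum_nonneg : 0 ≤ ν 0 * (⨆ i, w i) + 1 := by positivity
  refine div_le_div₀ hnum_nonneg (by linarith) hden_pos (by linarith)
end
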